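/- arXiv:2108.08588 — 7 statements merged into one kernel-verified Lean document; each statement's English description precedes it below -/
import Mathlib

section
/- For any mixed metric generator M of the prism allied graph D_n^t (n ≥ 4), M contains at least one vertex from the inner cycle {p_1, ..., p_n}. -/
/-- Vertices of the prism allied graph `Dₙᵗ`. -/
inductive DtV (n : ℕ) : Type
  | p : Fin n → DtV n
  | q : Fin n → DtV n
  | r : Fin n → DtV n
  | s : Fin n → DtV n
  deriving DecidableEq


/-- Cyclic successor on `Fin n` (indices mod `n`). -/
def finSucc {n : ℕ} (i : Fin n) : Fin n :=
  ⟨(i.val + 1) % n, Nat.mod_lt _ (Nat.lt_of_le_of_lt (Nat.zero_le _) i.isLt)⟩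

/-- Base relation for the edges of the prism allied graph. -/
def DtRel (n : ℕ) : DtV n → DtV n → Prop := fun a b =>
  ∃ i : Fin n,
    (a = .p i ∧ b = .q i) ∨ (a = .p i ∧ b = .p (finSucc i)) ∨
    (a = .q i ∧ b = .q (finSucc i)) ∨ (a = .r i ∧ b = .q i) ∨
    (a = .r i ∧ b = .q (finSucc i)) ∨ (a = .r i ∧ b = .s i)

/-- The prism allied graph `Dₙᵗ`. -/
def Dt (n : ℕ) : SimpleGraph (DtV n) := SimpleGraph.fromRel (DtRel n)

/-- Vertices of the web graph `Wₙ`. -/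
inductive WV (n : ℕ) : Type
  | p : Fin n → WV n
  | q : Fin n → WV n
  | r : Fin n → WV n
  deriving DecidableEq

/-- Base relation for the edges of the web graph. -/
def WRel (n : ℕ) : WV n → WV n → Prop := fun a b =>
  ∃ i : Fin n,
    (a = .p i ∧ b = .q i) ∨ (a = .p i ∧ b = .p (finSucc i)) ∨
    (a = .q i ∧ b = .q (finSucc i)) ∨ (a = .q i ∧ b = .r i)

/-- The web graph `Wₙ`. -/
def W (n : ℕ) : SimpleGraph (WV n) := SimpleGraph.fromRel (WRel n)

/-- Distance from a vertex to an (unordered) edge: `d(x, uv) = min (d x u) (d x v)`. -/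
noncomputable def edgeDist {V : Type*} (G : SimpleGraph V) (w : V) (e : Sym2 V) : ℕ :=
  Sym2.lift ⟨fun u v => min (G.dist w u) (G.dist w v), fun u v => min_comm _ _⟩ e

/-- Distance from a vertex to a mixed element (a vertex or an edge). -/
noncomputable def mixedDist {V : Type*} (G : SimpleGraph V) (w : V) :
    V ⊕ G.edgeSet → ℕ :=
  Sum.elim (G.dist w) (fun e => edgeDist G w e.1)

/-- `M` is a mixed metric generator: every two distinct elements of `V(G) ∪ E(G)` are
distinguished by some vertex of `M`. -/
def IsMixedMetricGen {V : Type*} (G : SimpleGraph V) (M : Set V) : Prop :=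
  ∀ a b : V ⊕ G.edgeSet, a ≠ b → ∃ w ∈ M, mixedDist G w a ≠ mixedDist G w b

/-- `M` is a (vertex) resolving set. -/
def IsResolving {V : Type*} (G : SimpleGraph V) (M : Set V) : Prop :=
  ∀ a b : V, a ≠ b → ∃ w ∈ M, G.dist w a ≠ G.dist w b

/-- `M` is an edge resolving set. -/
def IsEdgeResolving {V : Type*} (G : SimpleGraph V) (M : Set V) : Prop :=
  ∀ a b : G.edgeSet, a ≠ b → ∃ w ∈ M, edgeDist G w a.1 ≠ edgeDist G w b.1

/-- The metric dimension of `G`. -/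
noncomputable def metricDim {V : Type*} (G : SimpleGraph V) : ℕ :=
  sInf {k | ∃ M : Set V, IsResolving G M ∧ M.ncard = k}

/-- The edge metric dimension of `G`. -/
noncomputable def edgeMetricDim {V : Type*} (G : SimpleGraph V) : ℕ :=
  sInf {k | ∃ M : Set V, IsEdgeResolving G M ∧ M.ncard = k}

/-- The mixed metric dimension of `G`. -/
noncomputable def mixedMetricDim {V : Type*} (G : SimpleGraph V) : ℕ :=
  sInf {k | ∃ M : Set V, IsMixedMetricGen G M ∧ M.ncard = k}

/-- The retraction collapsing the inner cycle onto the middle cycle. -/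
def fmapD {n : ℕ} : DtV n → DtV n
  | .p j => .q j
  | x => x

lemma finSucc_ne {n : ℕ} (hn : 2 ≤ n) (i : Fin n) : finSucc i ≠ i := by
  intro h
  have h2 : (i.val + 1) % n = i.val := congrArg Fin.val h
  have h3 : i.val < n := i.isLt
  rcases Nat.lt_or_ge (i.val + 1) n with h1 | h1
  · rw [Nat.mod_eq_of_lt h1] at h2; omega
  · have h4 : i.val + 1 = n := by omega
    rw [h4, Nat.mod_self] at h2; omega

lemma adj_qq {n : ℕ} (hn : 2 ≤ n) (i : Fin n) :
    (Dt n).Adj (.q i) (.q (finSucc i)) := by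
  rw [Dt, SimpleGraph.fromRel_adj]
  refine ⟨fun h => finSucc_ne hn i (DtV.q.inj h).symm, Or.inl ⟨i, ?_⟩⟩
  exact Or.inr (Or.inr (Or.inl ⟨rfl, rfl⟩))

lemma adj_pq {n : ℕ} (i : Fin n) : (Dt n).Adj (.p i) (.q i) := by
  rw [Dt, SimpleGraph.fromRel_adj]
  exact ⟨fun h => (by cases h), Or.inl ⟨i, Or.inl ⟨rfl, rfl⟩⟩⟩

lemma fmapD_adj {n : ℕ} (hn : 2 ≤ n) {u v : DtV n} (h : (Dt n).Adj u v) :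
    fmapD u = fmapD v ∨ (Dt n).Adj (fmapD u) (fmapD v) := by
  have h' := h
  rw [Dt, SimpleGraph.fromRel_adj] at h'
  obtain ⟨hne, hrel⟩ := h'
  rcases hrel with ⟨i, hc⟩ | ⟨i, hc⟩ <;>
    rcases hc with ⟨h1,h2⟩|⟨h1,h2⟩|⟨h1,h2⟩|⟨h1,h2⟩|⟨h1,h2⟩|⟨h1,h2⟩ <;>
    subst h1 <;> subst h2 <;> simp only [fmapD] <;>
    first
      | (left; trivial)
      | (right; first | exact h | exact adj_qq hn i | exact (adj_qq hn i).symm)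

lemma fmapD_walk {n : ℕ} (hn : 2 ≤ n) {u v : DtV n} (w : (Dt n).Walk u v) :
    ∃ w' : (Dt n).Walk (fmapD u) (fmapD v), w'.length ≤ w.length := by
  induction w with
  | nil => exact ⟨.nil, le_refl _⟩
  | cons h p ih =>
    obtain ⟨w', hw'⟩ := ih
    rcases fmapD_adj hn h with he | ha
    · exact ⟨w'.copy he.symm rfl, by
        rw [SimpleGraph.Walk.length_copy, SimpleGraph.Walk.length_cons]; omega⟩
    · exact ⟨.cons ha w', by
        rw [SimpleGraph.Walk.length_cons, SimpleGraph.Walk.length_cons]; omega⟩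

lemma dist_q_le_dist_p {n : ℕ} (hn : 2 ≤ n) (w : DtV n) (i : Fin n)
    (hw : fmapD w = w) :
    (Dt n).dist w (DtV.q i) ≤ (Dt n).dist w (DtV.p i) := by
  by_cases hr : (Dt n).Reachable w (DtV.p i)
  · obtain ⟨wk, hwk⟩ := hr.exists_walk_length_eq_dist
    obtain ⟨wk', hlen⟩ := fmapD_walk hn wk
    calc (Dt n).dist w (DtV.q i) ≤ (wk'.copy hw rfl).length :=
          SimpleGraph.dist_le _
      _ = wk'.length := SimpleGraph.Walk.length_copy _ _ _
      _ ≤ wk.length := hlen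
      _ = (Dt n).dist w (DtV.p i) := hwk
  · have h1 : (Dt n).dist w (DtV.p i) = 0 :=
      SimpleGraph.dist_eq_zero_of_not_reachable hr
    have h2 : ¬ (Dt n).Reachable w (DtV.q i) := fun h =>
      hr (h.trans (adj_pq i).symm.reachable)
    have h3 : (Dt n).dist w (DtV.q i) = 0 :=
      SimpleGraph.dist_eq_zero_of_not_reachable h2
    omega

theorem stmt1 (n : ℕ) (hn : 4 ≤ n) (M : Set (DtV n))
    (hM : IsMixedMetricGen (Dt n) M) : ∃ i : Fin n, DtV.p i ∈ M := by
  have hn2 : 2 ≤ n := by omega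
  have hpos : 0 < n := by omega
  set i : Fin n := ⟨0, hpos⟩ with hi
  have hedge : s(DtV.p i, DtV.q i) ∈ (Dt n).edgeSet := adj_pq i
  obtain ⟨w, hwM, hw⟩ := hM (Sum.inr ⟨_, hedge⟩) (Sum.inl (DtV.q i))
    (by simp)
  cases w with
  | p j => exact ⟨j, hwM⟩
  | q j =>
    exact absurd (by
      simp only [mixedDist, Sum.elim_inr, Sum.elim_inl, edgeDist, Sym2.lift_mk]
      exact min_eq_right (dist_q_le_dist_p hn2 _ i rfl)) hw
  | r j =>
    exact absurd (by
      simp only [mixedDist, Sum.elim_inr, Sum.elim_inl, edgeDist, Sym2.lift_mk]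
      exact min_eq_right (dist_q_le_dist_p hn2 _ i rfl)) hw
  | s j =>
    exact absurd (by
      simp only [mixedDist, Sum.elim_inr, Sum.elim_inl, edgeDist, Sym2.lift_mk]
      exact min_eq_right (dist_q_le_dist_p hn2 _ i rfl)) hw
end

section
/- For the prism allied graph D_n^t with n ≥ 4, every mixed metric generator has cardinality at least n + 1. -/
namespace DtAux

open SimpleGraph

variable {n : ℕ}

instance : Finite (DtV n) := by
  apply Finite.of_injective (fun v : DtV n => match v with
    | .p i => (i, (0 : Fin 4)) | .q i => (i, 1) | .r i => (i, 2) | .s i => (i, 3))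
  intro a b h
  cases a <;> cases b <;> simp_all

lemma finSucc_ne (hn : 2 ≤ n) (i : Fin n) : finSucc i ≠ i := by
  intro h
  have h' : (i.val + 1) % n = i.val := congrArg Fin.val h
  rcases Nat.lt_or_ge (i.val + 1) n with h1 | h1
  · rw [Nat.mod_eq_of_lt h1] at h'; omega
  · have : i.val + 1 = n := by have := i.isLt; omega
    rw [this, Nat.mod_self] at h'; omega

/-- The projection collapsing the `p`-cycle onto the `q`-cycle. -/
def proj : DtV n → DtV n
  | .p i => .q i
  | v => v

lemma proj_adj (hn : 2 ≤ n) {a b : DtV n} (h : (Dt n).Adj a b) :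
    (Dt n).Adj (proj a) (proj b) ∨ proj a = proj b := by
  have key : ∀ a b : DtV n, a ≠ b → DtRel n a b →
      (Dt n).Adj (proj a) (proj b) ∨ proj a = proj b := by
    intro a b hne ⟨i, hrel⟩
    rcases hrel with ⟨ha, hb⟩ | ⟨ha, hb⟩ | ⟨ha, hb⟩ | ⟨ha, hb⟩ | ⟨ha, hb⟩ | ⟨ha, hb⟩ <;>
      subst ha <;> subst hb
    · right; rfl
    · left
      rw [Dt, SimpleGraph.fromRel_adj]
      refine ⟨fun h => ?_, ?_⟩
      · simp only [proj, DtV.q.injEq] at h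
        exact finSucc_ne hn i h.symm
      exact
        Or.inl ⟨i, Or.inr (Or.inr (Or.inl ⟨rfl, rfl⟩))⟩
    · exact Or.inl ((SimpleGraph.fromRel_adj _ _ _).2
        ⟨hne, Or.inl ⟨i, Or.inr (Or.inr (Or.inl ⟨rfl, rfl⟩))⟩⟩)
    · exact Or.inl ((SimpleGraph.fromRel_adj _ _ _).2
        ⟨hne, Or.inl ⟨i, Or.inr (Or.inr (Or.inr (Or.inl ⟨rfl, rfl⟩)))⟩⟩)
    · exact Or.inl ((SimpleGraph.fromRel_adj _ _ _).2
        ⟨hne, Or.inl ⟨i, Or.inr (Or.inr (Or.inr (Or.inr (Or.inl ⟨rfl, rfl⟩))))⟩⟩)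
    · exact Or.inl ((SimpleGraph.fromRel_adj _ _ _).2
        ⟨hne, Or.inl ⟨i, Or.inr (Or.inr (Or.inr (Or.inr (Or.inr ⟨rfl, rfl⟩))))⟩⟩)
  rw [Dt, SimpleGraph.fromRel_adj] at h
  obtain ⟨hne, hrel | hrel⟩ := h
  · exact key a b hne hrel
  · rcases key b a hne.symm hrel with h | h
    · exact Or.inl h.symm
    · exact Or.inr h.symm

lemma proj_walk (hn : 2 ≤ n) {a b : DtV n} (Wa : (Dt n).Walk a b) :
    ∃ W' : (Dt n).Walk (proj a) (proj b), W'.length ≤ Wa.length := by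
  induction Wa with
  | nil => exact ⟨.nil, le_rfl⟩
  | @cons u v w h W ih =>
    obtain ⟨W', hW'⟩ := ih
    rcases proj_adj hn h with hadj | heq
    · exact ⟨.cons hadj W', by simp [SimpleGraph.Walk.length_cons]; omega⟩
    · rw [heq]
      exact ⟨W', hW'.trans (by simp [SimpleGraph.Walk.length_cons])⟩

lemma s_neighbor {i : Fin n} {x : DtV n} (h : (Dt n).Adj (.s i) x) : x = .r i := by
  rw [Dt, SimpleGraph.fromRel_adj] at h
  obtain ⟨-, ⟨j, hrel⟩ | ⟨j, hrel⟩⟩ := h <;>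
    rcases hrel with ⟨ha, hb⟩ | ⟨ha, hb⟩ | ⟨ha, hb⟩ | ⟨ha, hb⟩ | ⟨ha, hb⟩ | ⟨ha, hb⟩ <;>
      simp_all

lemma r_s_adj (i : Fin n) : (Dt n).Adj (.r i) (.s i) := by
  rw [Dt, SimpleGraph.fromRel_adj]
  exact ⟨by simp, Or.inl ⟨i, Or.inr (Or.inr (Or.inr (Or.inr (Or.inr ⟨rfl, rfl⟩))))⟩⟩

lemma p_q_adj (i : Fin n) : (Dt n).Adj (.p i) (.q i) := by
  rw [Dt, SimpleGraph.fromRel_adj]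
  exact ⟨by simp, Or.inl ⟨i, Or.inl ⟨rfl, rfl⟩⟩⟩

lemma walk_from_s {i : Fin n} {w : DtV n} (R : (Dt n).Walk (.s i) w) (hne : w ≠ .s i) :
    (Dt n).dist (.r i) w + 1 ≤ R.length := by
  cases R with
  | nil => exact absurd rfl hne
  | @cons _ x _ h T =>
    have hx : x = DtV.r i := s_neighbor h
    subst hx
    have := SimpleGraph.dist_le T
    simp [SimpleGraph.Walk.length_cons]
    omega

/-- Key lemma A: the leaf dominates. -/
lemma dist_r_le_s {i : Fin n} {w : DtV n} (hne : w ≠ .s i) :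
    (Dt n).dist w (.r i) ≤ (Dt n).dist w (.s i) := by
  by_cases hr : (Dt n).Reachable w (.s i)
  · obtain ⟨W, hW⟩ := hr.exists_walk_length_eq_dist
    have h1 := walk_from_s W.reverse hne
    rw [SimpleGraph.Walk.length_reverse, hW] at h1
    rw [SimpleGraph.dist_comm]
    omega
  · have hr' : ¬ (Dt n).Reachable w (.r i) := fun h =>
      hr (h.trans (r_s_adj i).reachable)
    rw [SimpleGraph.dist_eq_zero_of_not_reachable hr,
      SimpleGraph.dist_eq_zero_of_not_reachable hr']

/-- Key lemma B: from any `s`-vertex, `q i` is at least as close as `p i`. -/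
lemma dist_q_le_p (hn : 2 ≤ n) (j i : Fin n) :
    (Dt n).dist (.s j) (.q i) ≤ (Dt n).dist (.s j) (.p i) := by
  by_cases hr : (Dt n).Reachable (DtV.s j) (.p i)
  · obtain ⟨W, hW⟩ := hr.exists_walk_length_eq_dist
    obtain ⟨W', hW'⟩ := proj_walk hn W
    have := (SimpleGraph.dist_le W').trans hW'
    simp only [proj] at this
    omega
  · have hr' : ¬ (Dt n).Reachable (DtV.s j) (.q i) := fun h =>
      hr (h.trans (p_q_adj i).symm.reachable)
    rw [SimpleGraph.dist_eq_zero_of_not_reachable hr,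
      SimpleGraph.dist_eq_zero_of_not_reachable hr']

end DtAux

open DtAux in
theorem stmt2 (n : ℕ) (hn : 4 ≤ n) (M : Set (DtV n))
    (hM : IsMixedMetricGen (Dt n) M) : n + 1 ≤ M.ncard := by
  have hn2 : 2 ≤ n := by omega
  -- every s i is in M
  have hS : ∀ i : Fin n, DtV.s i ∈ M := by
    intro i
    have he : s(DtV.r i, DtV.s i) ∈ (Dt n).edgeSet := (r_s_adj i)
    obtain ⟨w, hwM, hw⟩ := hM (Sum.inl (DtV.r i)) (Sum.inr ⟨_, he⟩) (by simp)
    by_contra hne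
    apply hw
    have hwne : w ≠ DtV.s i := fun h => hne (h ▸ hwM)
    simp only [mixedDist, Sum.elim_inl, Sum.elim_inr, edgeDist, Sym2.lift_mk]
    exact (min_eq_left (dist_r_le_s hwne)).symm
  -- some element of M is not an s vertex
  have i0 : Fin n := ⟨0, by omega⟩
  obtain ⟨w, hwM, hw⟩ := hM (Sum.inl (DtV.q i0)) (Sum.inr ⟨_, (Dt n).mem_edgeSet.mpr (p_q_adj i0)⟩) (by simp)
  have hwS : w ∉ Set.range (DtV.s : Fin n → DtV n) := by
    rintro ⟨j, rfl⟩
    apply hw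
    simp only [mixedDist, Sum.elim_inl, Sum.elim_inr, edgeDist, Sym2.lift_mk]
    exact (min_eq_right (dist_q_le_p hn2 j i0)).symm
  -- count
  have hsub : insert w (Set.range (DtV.s : Fin n → DtV n)) ⊆ M := by
    intro x hx
    rcases hx with rfl | ⟨j, rfl⟩
    · exact hwM
    · exact hS j
  have hinj : Function.Injective (DtV.s : Fin n → DtV n) := by
    intro a b h; cases h; rfl
  have hcard : (Set.range (DtV.s : Fin n → DtV n)).ncard = n := by
    rw [← Nat.card_coe_set_eq, Nat.card_range_of_injective hinj,
      Nat.card_eq_fintype_card, Fintype.card_fin]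
  have hfin : (Set.range (DtV.s : Fin n → DtV n)).Finite := Set.toFinite _
  calc n + 1 = (insert w (Set.range (DtV.s : Fin n → DtV n))).ncard := by
        rw [Set.ncard_insert_of_notMem hwS hfin, hcard]
    _ ≤ M.ncard := Set.ncard_le_ncard hsub (Set.toFinite M)
end

section
/- For any mixed metric generator M of the web graph W_n (n ≥ 4), M contains at least one vertex from the inner cycle {p_1, ..., p_n}. -/
/-- Collapse the inner cycle onto the middle cycle. -/
def fmap {n : ℕ} : WV n → WV n
  | .p i => .q i
  | x => x

lemma fmap_adj {n : ℕ} {a b : WV n} (h : (W n).Adj a b) :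
    fmap a = fmap b ∨ (W n).Adj (fmap a) (fmap b) := by
  obtain ⟨hne, h⟩ := h
  have key : ∀ x y : WV n, x ≠ y → WRel n x y →
      fmap x = fmap y ∨ (W n).Adj (fmap x) (fmap y) := by
    intro x y hxy ⟨i, hrel⟩
    rcases hrel with ⟨hx, hy⟩ | ⟨hx, hy⟩ | ⟨hx, hy⟩ | ⟨hx, hy⟩ <;> subst hx <;> subst hy
    · exact Or.inl rfl
    · refine Or.inr ⟨?_, Or.inl ⟨i, by simp [fmap]⟩⟩
      simp only [fmap]
      intro hii
      injection hii with hii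
      exact hxy (congrArg WV.p hii)
    · exact Or.inr ⟨by simpa [fmap] using hxy, Or.inl ⟨i, by simp [fmap]⟩⟩
    · exact Or.inr ⟨by simpa [fmap] using hxy, Or.inl ⟨i, by simp [fmap]⟩⟩
  rcases h with h | h
  · exact key a b hne h
  · rcases key b a hne.symm h with h' | h'
    · exact Or.inl h'.symm
    · exact Or.inr h'.symm

lemma fmap_walk {n : ℕ} {u v : WV n} (p : (W n).Walk u v) :
    ∃ q : (W n).Walk (fmap u) (fmap v), q.length ≤ p.length := by
  induction p with
  | nil => exact ⟨.nil, le_rfl⟩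
  | @cons a b c h p ih =>
    obtain ⟨q, hq⟩ := ih
    rcases fmap_adj h with he | ha
    · exact ⟨q.copy he.symm rfl, by simpa using hq.trans (Nat.le_succ _)⟩
    · exact ⟨.cons ha q, by simpa using hq⟩

lemma fmap_dist {n : ℕ} {u v : WV n} (h : (W n).Reachable u v) :
    (W n).dist (fmap u) (fmap v) ≤ (W n).dist u v := by
  obtain ⟨p, hp⟩ := h.exists_walk_length_eq_dist
  obtain ⟨q, hq⟩ := fmap_walk p
  exact (SimpleGraph.dist_le q).trans (hp ▸ hq)

lemma W_adj_pq {n : ℕ} (i : Fin n) : (W n).Adj (WV.p i) (WV.q i) :=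
  ⟨by simp, Or.inl ⟨i, by simp⟩⟩

lemma W_adj_qr {n : ℕ} (i : Fin n) : (W n).Adj (WV.q i) (WV.r i) :=
  ⟨by simp, Or.inl ⟨i, by simp⟩⟩

lemma W_adj_qq {n : ℕ} (hn : 2 ≤ n) (i : Fin n) :
    (W n).Adj (WV.q i) (WV.q (finSucc i)) := by
  refine ⟨?_, Or.inl ⟨i, by simp⟩⟩
  intro h
  injection h with h
  have h2 : i.val = (i.val + 1) % n := congrArg Fin.val h
  have hi := i.isLt
  rcases Nat.lt_or_ge (i.val + 1) n with hlt | hge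
  · rw [Nat.mod_eq_of_lt hlt] at h2; omega
  · have : i.val + 1 = n := by omega
    rw [this, Nat.mod_self] at h2
    omega

lemma W_reach_q0 {n : ℕ} (hn : 2 ≤ n) (v : WV n) :
    (W n).Reachable (WV.q ⟨0, by omega⟩) v := by
  have hq : ∀ m (hm : m < n), (W n).Reachable (WV.q ⟨0, by omega⟩) (WV.q ⟨m, hm⟩) := by
    intro m
    induction m with
    | zero => intro _; rfl
    | succ k ih =>
      intro hm
      have hk : k < n := by omega
      have := ih hk
      refine this.trans (SimpleGraph.Adj.reachable ?_)
      have : finSucc (⟨k, hk⟩ : Fin n) = ⟨k + 1, hm⟩ := by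
        simp [finSucc, Nat.mod_eq_of_lt hm]
      simpa [this] using W_adj_qq hn ⟨k, hk⟩
  cases v with
  | p i => exact (hq i.val i.isLt).trans (SimpleGraph.Adj.reachable (W_adj_pq i).symm)
  | q i => exact hq i.val i.isLt
  | r i => exact (hq i.val i.isLt).trans (SimpleGraph.Adj.reachable (W_adj_qr i))

lemma W_reachable {n : ℕ} (hn : 2 ≤ n) (u v : WV n) : (W n).Reachable u v :=
  (W_reach_q0 hn u).symm.trans (W_reach_q0 hn v)

theorem stmt7 (n : ℕ) (hn : 4 ≤ n) (M : Set (WV n))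
    (hM : IsMixedMetricGen (W n) M) : ∃ i : Fin n, WV.p i ∈ M := by
  classical
  have hn2 : 2 ≤ n := by omega
  set i : Fin n := ⟨0, by omega⟩ with hi
  have hadj : (W n).Adj (WV.p i) (WV.q i) := W_adj_pq i
  have hedge : s(WV.p i, WV.q i) ∈ (W n).edgeSet := hadj
  obtain ⟨w, hwM, hw⟩ := hM (Sum.inl (WV.q i)) (Sum.inr ⟨_, hedge⟩) (by simp)
  have hdist : (W n).dist w (WV.q i) ≠
      min ((W n).dist w (WV.p i)) ((W n).dist w (WV.q i)) := by
    simpa [mixedDist, edgeDist] using hw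
  cases w with
  | p j => exact ⟨j, hwM⟩
  | q j =>
    exfalso
    apply hdist
    have := fmap_dist (u := WV.q j) (v := WV.p i) (W_reachable hn2 _ _)
    simp only [fmap] at this
    omega
  | r j =>
    exfalso
    apply hdist
    have := fmap_dist (u := WV.r j) (v := WV.p i) (W_reachable hn2 _ _)
    simp only [fmap] at this
    omega
end

section
/- For the web graph W_n with n ≥ 4, every mixed metric generator has cardinality at least n + 1. -/
-- only neighbor of r i is q i
lemma r_nbr {n : ℕ} {x : WV n} {i : Fin n} (h : (W n).Adj x (.r i)) : x = .q i := by
  obtain ⟨hne, h | h⟩ := h <;> obtain ⟨j, h⟩ := h <;>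
    rcases h with ⟨h1,h2⟩|⟨h1,h2⟩|⟨h1,h2⟩|⟨h1,h2⟩ <;> simp_all

instance {n : ℕ} : Finite (WV n) := by
  apply Finite.of_injective (fun x : WV n => match x with
    | .p i => ((0 : Fin 3), i) | .q i => (1, i) | .r i => (2, i))
  rintro (a|a|a) (b|b|b) h <;> simp_all

-- if d(w, r i) < d(w, q i) then w = r i
lemma pendant {n : ℕ} {w : WV n} {i : Fin n}
    (h : (W n).dist w (.r i) < (W n).dist w (.q i)) : w = .r i := by
  by_contra hw
  have hq : (W n).dist w (.q i) ≠ 0 := by omega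
  have hr : (W n).dist w (.r i) ≠ 0 := by
    intro h0
    have : (W n).Reachable w (.q i) := SimpleGraph.Reachable.of_dist_ne_zero hq
    have hadj : (W n).Adj (.q i) (.r i) :=
      ⟨by simp, Or.inl ⟨i, by simp⟩⟩
    have : (W n).Reachable w (.r i) := this.trans hadj.reachable
    have := (SimpleGraph.dist_ne_zero_iff_ne_and_reachable).mpr ⟨hw, this⟩
    exact this h0
  obtain ⟨p, hp⟩ := SimpleGraph.exists_walk_of_dist_ne_zero hr
  obtain ⟨x, hadj, p', hpe⟩ := SimpleGraph.Walk.exists_eq_cons_of_ne (Ne.symm hw) p.reverse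
  have hx : x = .q i := r_nbr hadj.symm
  subst hx
  have hlen : p'.length + 1 = p.length := by
    have := congrArg SimpleGraph.Walk.length hpe
    simpa [SimpleGraph.Walk.length_reverse] using this.symm
  have : (W n).dist w (.q i) ≤ p'.reverse.length := SimpleGraph.dist_le _
  rw [SimpleGraph.Walk.length_reverse] at this
  omega

def proj {n : ℕ} : WV n → WV n
  | .p i => .q i
  | x => x

lemma proj_hom {n : ℕ} (hn : 2 ≤ n) {a b : WV n} (h : (W n).Adj a b) :
    proj a = proj b ∨ (W n).Adj (proj a) (proj b) := by
  have hqq : ∀ i : Fin n, (W n).Adj (.q i) (.q (finSucc i)) := by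
    intro i
    exact ⟨by simp [(finSucc_ne hn i).symm], Or.inl ⟨i, by simp⟩⟩
  obtain ⟨hne, hr | hr⟩ := h <;> obtain ⟨j, hr⟩ := hr <;>
    rcases hr with ⟨h1,h2⟩|⟨h1,h2⟩|⟨h1,h2⟩|⟨h1,h2⟩ <;> subst h1 <;> subst h2
  · exact Or.inl rfl
  · exact Or.inr (hqq j)
  · exact Or.inr (hqq j)
  · refine Or.inr ?_
    show (W n).Adj (.q j) (.r j)
    exact ⟨by simp, Or.inl ⟨j, by simp⟩⟩
  · exact Or.inl rfl
  · exact Or.inr (hqq j).symm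
  · exact Or.inr (hqq j).symm
  · refine Or.inr ?_
    show (W n).Adj (.r j) (.q j)
    exact ⟨by simp, Or.inr ⟨j, by simp⟩⟩

lemma proj_walk {n : ℕ} (hn : 2 ≤ n) {u v : WV n} (p : (W n).Walk u v) :
    ∃ q : (W n).Walk (proj u) (proj v), q.length ≤ p.length := by
  induction p with
  | nil => exact ⟨SimpleGraph.Walk.nil, le_refl _⟩
  | cons h p ih =>
    obtain ⟨q, hq⟩ := ih
    rcases proj_hom hn h with he | ha
    · rw [he]
      exact ⟨q, by simp [SimpleGraph.Walk.length_cons]; omega⟩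
    · exact ⟨SimpleGraph.Walk.cons ha q, by simp [SimpleGraph.Walk.length_cons]; omega⟩

theorem stmt8 (n : ℕ) (hn : 4 ≤ n) (M : Set (WV n))
    (hM : IsMixedMetricGen (W n) M) : n + 1 ≤ M.ncard := by
  have hn2 : 2 ≤ n := by omega
  -- step 1: all r i are in M
  have hr : ∀ i : Fin n, (WV.r i : WV n) ∈ M := by
    intro i
    have hadj : (W n).Adj (.q i) (.r i) := ⟨by simp, Or.inl ⟨i, by simp⟩⟩
    have he : s(WV.q i, WV.r i) ∈ (W n).edgeSet := hadj
    obtain ⟨w, hwM, hne⟩ := hM (Sum.inl (.q i)) (Sum.inr ⟨s(.q i, .r i), he⟩) (by simp)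
    have hne' : (W n).dist w (.q i) ≠
        min ((W n).dist w (.q i)) ((W n).dist w (.r i)) := hne
    have hlt : (W n).dist w (.r i) < (W n).dist w (.q i) := by
      rcases min_cases ((W n).dist w (.q i)) ((W n).dist w (.r i)) with ⟨h1, h2⟩ | ⟨h1, h2⟩ <;>
        omega
    have := pendant hlt
    subst this; exact hwM
  -- step 2: there is an element of M outside the range of r
  set i0 : Fin n := ⟨0, by omega⟩ with hi0
  have hadj : (W n).Adj (.p i0) (.q i0) := ⟨by simp, Or.inl ⟨i0, by simp⟩⟩
  have he : s(WV.p i0, WV.q i0) ∈ (W n).edgeSet := hadj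
  obtain ⟨w, hwM, hne⟩ := hM (Sum.inl (.q i0)) (Sum.inr ⟨s(.p i0, .q i0), he⟩) (by simp)
  have hne' : (W n).dist w (.q i0) ≠
      min ((W n).dist w (.p i0)) ((W n).dist w (.q i0)) := hne
  have hlt : (W n).dist w (.p i0) < (W n).dist w (.q i0) := by
    rcases min_cases ((W n).dist w (.p i0)) ((W n).dist w (.q i0)) with ⟨h1, h2⟩ | ⟨h1, h2⟩ <;>
      omega
  have hwr : w ∉ Set.range (WV.r : Fin n → WV n) := by
    rintro ⟨j, rfl⟩
    have hq0 : (W n).dist (WV.r j) (.q i0) ≠ 0 := by omega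
    have hreach : (W n).Reachable (WV.r j) (.p i0) :=
      (SimpleGraph.Reachable.of_dist_ne_zero hq0).trans hadj.symm.reachable
    obtain ⟨pw, hpw⟩ := hreach.exists_walk_length_eq_dist
    obtain ⟨qw, hqw⟩ := proj_walk hn2 pw
    have h5 : (W n).dist (WV.r j) (.q i0) ≤ qw.length := SimpleGraph.dist_le qw
    omega
  -- step 3: counting
  have hinj : Function.Injective (WV.r : Fin n → WV n) := by
    intro a b h; cases h; rfl
  have hrn : (Set.range (WV.r : Fin n → WV n)).ncard = n := by
    rw [← Set.image_univ, Set.ncard_image_of_injective _ hinj, Set.ncard_univ,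
      Nat.card_eq_fintype_card, Fintype.card_fin]
  have hsub : insert w (Set.range (WV.r : Fin n → WV n)) ⊆ M := by
    rintro x (rfl | ⟨j, rfl⟩)
    · exact hwM
    · exact hr j
  have hcard : (insert w (Set.range (WV.r : Fin n → WV n))).ncard = n + 1 := by
    rw [Set.ncard_insert_of_notMem hwr (Set.toFinite _), hrn]
  calc n + 1 = _ := hcard.symm
    _ ≤ M.ncard := Set.ncard_le_ncard hsub (Set.toFinite M)
end

section
/- For the web graph W_n with n ≥ 4, the mixed metric dimension equals n + 1. -/
/-- Cyclic successor on `Fin n` (indices mod `n`). -/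

def finPred {n : ℕ} (i : Fin n) : Fin n :=
  ⟨(i.val + (n - 1)) % n, Nat.mod_lt _ (Nat.lt_of_le_of_lt (Nat.zero_le _) i.isLt)⟩

/-- cycle distance -/
def cy {n : ℕ} (i j : Fin n) : ℕ := min (Nat.dist i.val j.val) (n - Nat.dist i.val j.val)

namespace Web
variable {n : ℕ}

lemma finSucc_val (i : Fin n) :
    (finSucc i).val = if i.val + 1 = n then 0 else i.val + 1 := by
  have h := i.isLt
  simp only [finSucc]
  split_ifs with h1
  · simp [h1]
  · exact Nat.mod_eq_of_lt (by omega)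

lemma finPred_val (i : Fin n) :
    (finPred i).val = if i.val = 0 then n - 1 else i.val - 1 := by
  have h := i.isLt
  simp only [finPred]
  split_ifs with h1
  · rw [h1, Nat.zero_add]; exact Nat.mod_eq_of_lt (by omega)
  · have h2 : i.val + (n - 1) = (i.val - 1) + n := by omega
    rw [h2, Nat.add_mod_right]
    have h3 : i.val - 1 < n := by omega
    exact Nat.mod_eq_of_lt h3

lemma finSucc_finPred (i : Fin n) : finSucc (finPred i) = i := by
  have h := i.isLt
  apply Fin.ext
  rw [finSucc_val, finPred_val]
  split_ifs <;> omega

lemma cy_self (i : Fin n) : cy i i = 0 := by simp [cy, Nat.dist]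

lemma cy_comm (i j : Fin n) : cy i j = cy j i := by
  simp [cy, Nat.dist]; omega

lemma cy_eq_zero_iff (i j : Fin n) : cy i j = 0 ↔ i.val = j.val := by
  have hi := i.isLt; have hj := j.isLt
  simp [cy, Nat.dist]; omega

lemma cy_succ_lip (k j : Fin n) : cy k (finSucc j) ≤ cy k j + 1 ∧ cy k j ≤ cy k (finSucc j) + 1 := by
  have hk := k.isLt; have hj := j.isLt
  have h := finSucc_val j
  simp only [cy, Nat.dist, h]
  split_ifs <;> omega

lemma cy_succ_self (hn : 2 ≤ n) (j : Fin n) : cy j (finSucc j) = 1 := by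
  have hj := j.isLt
  have h := finSucc_val j
  simp only [cy, Nat.dist, h]
  split_ifs <;> omega

lemma finSucc_val_cases (i : Fin n) :
    (finSucc i).val = i.val + 1 ∨ (i.val + 1 = n ∧ (finSucc i).val = 0) := by
  rw [finSucc_val]; split_ifs with h
  · exact Or.inr ⟨h, rfl⟩
  · exact Or.inl rfl

lemma cy_succ_succ (hn : 4 ≤ n) (j : Fin n) : 2 ≤ cy j (finSucc (finSucc j)) := by
  have hj := j.isLt
  have hj2 := (finSucc j).isLt
  have h := finSucc_val_cases j
  have h2 := finSucc_val_cases (finSucc j)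
  simp only [cy, Nat.dist]
  rcases h with h | ⟨e, h⟩ <;> rcases h2 with h2 | ⟨e2, h2⟩ <;> omega

lemma finPred_val_cases (i : Fin n) :
    (finPred i).val + 1 = i.val ∨ (i.val = 0 ∧ (finPred i).val + 1 = n) := by
  rw [finPred_val]; split_ifs with h
  · have := i.isLt; exact Or.inr ⟨h, by omega⟩
  · exact Or.inl (by omega)

lemma cy_desc (k j : Fin n) (h : cy k j ≠ 0) :
    cy k (finSucc j) + 1 = cy k j ∨ cy k (finPred j) + 1 = cy k j := by
  have hk := k.isLt; have hj := j.isLt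
  have hs := finSucc_val_cases j
  have hp := finPred_val_cases j
  have hs2 := (finSucc j).isLt
  have hp2 := (finPred j).isLt
  simp only [cy, Nat.dist] at h ⊢
  rcases hs with hs | ⟨e, hs⟩ <;> rcases hp with hp | ⟨e2, hp⟩ <;> omega

lemma finSucc_ne (hn : 2 ≤ n) (i : Fin n) : finSucc i ≠ i := by
  have hi := i.isLt
  intro h
  have := congrArg Fin.val h
  rw [finSucc_val] at this
  split_ifs at this <;> omega

end Web

namespace Web
variable {n : ℕ}

/-- exact distance via potential function -/
lemma dist_eq_of {V : Type*} (G : SimpleGraph V) (w : V) (D : V → ℕ)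
    (h0 : D w = 0) (hzero : ∀ v, D v = 0 → v = w)
    (hlip : ∀ u v : V, G.Adj u v → D v ≤ D u + 1)
    (hdesc : ∀ v : V, v ≠ w → ∃ u, G.Adj u v ∧ D u + 1 = D v) (v : V) :
    G.dist w v = D v := by
  have walk : ∀ m (v : V), D v ≤ m → ∃ p : G.Walk w v, p.length = D v := by
    intro m
    induction m with
    | zero =>
      intro v hv
      have := hzero v (Nat.le_zero.1 hv); subst this
      exact ⟨.nil, by simp [h0]⟩
    | succ m ih =>
      intro v hv
      by_cases hvw : v = w
      · subst hvw; exact ⟨.nil, by simp [h0]⟩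
      · obtain ⟨u, hadj, hu⟩ := hdesc v hvw
        obtain ⟨p, hp⟩ := ih u (by omega)
        exact ⟨p.concat hadj, by rw [SimpleGraph.Walk.length_concat, hp]; omega⟩
  obtain ⟨p, hp⟩ := walk (D v) v le_rfl
  have hub : G.dist w v ≤ D v := hp ▸ SimpleGraph.dist_le p
  have key : ∀ (a b : V) (q : G.Walk a b), D b ≤ D a + q.length := by
    intro a b q
    induction q with
    | nil => simp
    | @cons x y z h q ih =>
      have := hlip x y h
      simp only [SimpleGraph.Walk.length_cons]
      omega
  obtain ⟨q, hq⟩ := (SimpleGraph.Reachable.exists_walk_length_eq_dist ⟨p⟩)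
  have hlb := key w v q
  rw [hq, h0] at hlb
  omega

def Dp (k : Fin n) : WV n → ℕ
  | .p i => cy k i
  | .q i => cy k i + 1
  | .r i => cy k i + 2

def Dq (k : Fin n) : WV n → ℕ
  | .p i => cy k i + 1
  | .q i => cy k i
  | .r i => if i = k then 1 else cy k i + 1

def Dr (k : Fin n) : WV n → ℕ
  | .p i => cy k i + 2
  | .q i => cy k i + 1
  | .r i => if i = k then 0 else cy k i + 2

lemma adj_pq (i : Fin n) : (W n).Adj (.p i) (.q i) := by
  rw [W, SimpleGraph.fromRel_adj]
  exact ⟨by simp, Or.inl ⟨i, Or.inl ⟨rfl, rfl⟩⟩⟩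

lemma adj_pp (hn : 2 ≤ n) (i : Fin n) : (W n).Adj (.p i) (.p (finSucc i)) := by
  rw [W, SimpleGraph.fromRel_adj]
  refine ⟨?_, Or.inl ⟨i, Or.inr (Or.inl ⟨rfl, rfl⟩)⟩⟩
  simp only [ne_eq, WV.p.injEq]
  exact fun h => finSucc_ne hn i h.symm

lemma adj_qq (hn : 2 ≤ n) (i : Fin n) : (W n).Adj (.q i) (.q (finSucc i)) := by
  rw [W, SimpleGraph.fromRel_adj]
  refine ⟨?_, Or.inl ⟨i, Or.inr (Or.inr (Or.inl ⟨rfl, rfl⟩))⟩⟩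
  simp only [ne_eq, WV.q.injEq]
  exact fun h => finSucc_ne hn i h.symm

lemma adj_qr (i : Fin n) : (W n).Adj (.q i) (.r i) := by
  rw [W, SimpleGraph.fromRel_adj]
  exact ⟨by simp, Or.inl ⟨i, Or.inr (Or.inr (Or.inr ⟨rfl, rfl⟩))⟩⟩

lemma hlip_cases {D : WV n → ℕ}
    (h1 : ∀ i, D (.p i) ≤ D (.q i) + 1) (h2 : ∀ i, D (.q i) ≤ D (.p i) + 1)
    (h3 : ∀ i, D (.p i) ≤ D (.p (finSucc i)) + 1) (h4 : ∀ i, D (.p (finSucc i)) ≤ D (.p i) + 1)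
    (h5 : ∀ i, D (.q i) ≤ D (.q (finSucc i)) + 1) (h6 : ∀ i, D (.q (finSucc i)) ≤ D (.q i) + 1)
    (h7 : ∀ i, D (.q i) ≤ D (.r i) + 1) (h8 : ∀ i, D (.r i) ≤ D (.q i) + 1) :
    ∀ u v : WV n, (W n).Adj u v → D v ≤ D u + 1 := by
  intro u v huv
  rw [W, SimpleGraph.fromRel_adj] at huv
  obtain ⟨-, hrel | hrel⟩ := huv <;> obtain ⟨i, h⟩ := hrel <;>
    rcases h with ⟨rfl, rfl⟩ | ⟨rfl, rfl⟩ | ⟨rfl, rfl⟩ | ⟨rfl, rfl⟩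
  · exact h2 i
  · exact h4 i
  · exact h6 i
  · exact h8 i
  · exact h1 i
  · exact h3 i
  · exact h5 i
  · exact h7 i

lemma dist_p (hn : 2 ≤ n) (k : Fin n) (v : WV n) : (W n).dist (.p k) v = Dp k v := by
  apply dist_eq_of
  · simp [Dp, cy_self]
  · intro v hv
    cases v with
    | p i =>
      simp only [Dp] at hv
      have := (cy_eq_zero_iff k i).1 hv
      exact congrArg WV.p (Fin.ext this.symm)
    | q i => simp [Dp] at hv
    | r i => simp [Dp] at hv
  · apply hlip_cases <;> intro i <;> simp only [Dp] <;>
      first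
      | omega
      | (have := cy_succ_lip k i; omega)
  · intro v hv
    cases v with
    | p i =>
      have hne : cy k i ≠ 0 := by
        intro h0
        exact hv (congrArg WV.p (Fin.ext ((cy_eq_zero_iff k i).1 h0).symm))
      rcases cy_desc k i hne with h | h
      · exact ⟨.p (finSucc i), ((adj_pp hn i).symm), by simp only [Dp]; omega⟩
      · refine ⟨.p (finPred i), ?_, by simp only [Dp]; omega⟩
        have := adj_pp hn (finPred i)
        rwa [finSucc_finPred] at this
    | q i => exact ⟨.p i, adj_pq i, by simp [Dp]⟩
    | r i => exact ⟨.q i, adj_qr i, by simp [Dp]⟩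

lemma dist_q (hn : 2 ≤ n) (k : Fin n) (v : WV n) : (W n).dist (.q k) v = Dq k v := by
  apply dist_eq_of
  · simp [Dq, cy_self]
  · intro v hv
    cases v with
    | q i =>
      simp only [Dq] at hv
      have := (cy_eq_zero_iff k i).1 hv
      exact congrArg WV.q (Fin.ext this.symm)
    | p i => simp [Dq] at hv
    | r i =>
      by_cases h : i = k
      · simp only [Dq, if_pos h] at hv
        exact (Nat.one_ne_zero hv).elim
      · simp only [Dq, if_neg h] at hv; omega
  · have c0 := cy_self k
    apply hlip_cases <;> intro i <;> simp only [Dq] <;>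
      first
      | omega
      | (have := cy_succ_lip k i; omega)
      | (split_ifs with h <;> first | omega | (subst h; omega))
  · intro v hv
    cases v with
    | q i =>
      have hne : cy k i ≠ 0 := by
        intro h0
        exact hv (congrArg WV.q (Fin.ext ((cy_eq_zero_iff k i).1 h0).symm))
      rcases cy_desc k i hne with h | h
      · exact ⟨.q (finSucc i), ((adj_qq hn i).symm), by simp only [Dq]; omega⟩
      · refine ⟨.q (finPred i), ?_, by simp only [Dq]; omega⟩
        have := adj_qq hn (finPred i)
        rwa [finSucc_finPred] at this
    | p i => exact ⟨.q i, (adj_pq i).symm, by simp [Dq]⟩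
    | r i =>
      refine ⟨.q i, adj_qr i, ?_⟩
      simp only [Dq]
      split_ifs with h
      · subst h; simp [cy_self]
      · rfl

lemma dist_r (hn : 2 ≤ n) (k : Fin n) (v : WV n) : (W n).dist (.r k) v = Dr k v := by
  apply dist_eq_of
  · simp [Dr]
  · intro v hv
    cases v with
    | r i =>
      by_cases h : i = k
      · subst h; rfl
      · simp only [Dr, if_neg h] at hv; omega
    | p i => simp [Dr] at hv
    | q i => simp [Dr] at hv
  · have c0 := cy_self k
    apply hlip_cases <;> intro i <;> simp only [Dr] <;>
      first
      | omega
      | (have := cy_succ_lip k i; omega)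
      | (split_ifs with h <;> first | omega | (subst h; omega))
  · intro v hv
    cases v with
    | p i => exact ⟨.q i, (adj_pq i).symm, by simp [Dr]⟩
    | q i =>
      by_cases h : i = k
      · subst h
        exact ⟨.r i, (adj_qr i).symm, by simp [Dr, cy_self]⟩
      · have hne : cy k i ≠ 0 := by
          intro h0
          exact h (Fin.ext ((cy_eq_zero_iff k i).1 h0).symm)
        rcases cy_desc k i hne with hd | hd
        · exact ⟨.q (finSucc i), ((adj_qq hn i).symm), by simp only [Dr]; omega⟩
        · refine ⟨.q (finPred i), ?_, by simp only [Dr]; omega⟩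
          have := adj_qq hn (finPred i)
          rwa [finSucc_finPred] at this
    | r i =>
      have h : i ≠ k := fun h => hv (by rw [h])
      refine ⟨.q i, adj_qr i, ?_⟩
      simp only [Dr, if_neg h]

end Web

namespace Web
variable {n : ℕ}

instance : Fintype (WV n) :=
  Fintype.ofEquiv (Fin n ⊕ Fin n ⊕ Fin n)
    { toFun := fun x => match x with
        | .inl i => .p i | .inr (.inl i) => .q i | .inr (.inr i) => .r i
      invFun := fun v => match v with
        | .p i => .inl i | .q i => .inr (.inl i) | .r i => .inr (.inr i)
      left_inv := by rintro (i | i | i) <;> rfl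
      right_inv := by rintro (i | i | i) <;> rfl }

lemma edge_cases (e : Sym2 (WV n)) (he : e ∈ (W n).edgeSet) :
    ∃ i : Fin n, e = s(.p i, .q i) ∨ e = s(.p i, .p (finSucc i)) ∨
      e = s(.q i, .q (finSucc i)) ∨ e = s(.q i, .r i) := by
  induction e using Sym2.ind with
  | _ a b =>
    rw [SimpleGraph.mem_edgeSet, W, SimpleGraph.fromRel_adj] at he
    obtain ⟨-, h | h⟩ := he <;> obtain ⟨i, h⟩ := h <;>
      rcases h with ⟨rfl, rfl⟩ | ⟨rfl, rfl⟩ | ⟨rfl, rfl⟩ | ⟨rfl, rfl⟩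
    · exact ⟨i, Or.inl rfl⟩
    · exact ⟨i, Or.inr (Or.inl rfl)⟩
    · exact ⟨i, Or.inr (Or.inr (Or.inl rfl))⟩
    · exact ⟨i, Or.inr (Or.inr (Or.inr rfl))⟩
    · exact ⟨i, Or.inl (Sym2.eq_swap)⟩
    · exact ⟨i, Or.inr (Or.inl (Sym2.eq_swap))⟩
    · exact ⟨i, Or.inr (Or.inr (Or.inl (Sym2.eq_swap)))⟩
    · exact ⟨i, Or.inr (Or.inr (Or.inr (Sym2.eq_swap)))⟩

lemma md_inl (w v : WV n) : mixedDist (W n) w (Sum.inl v) = (W n).dist w v := rfl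

lemma md_inr (w u v : WV n) (h : s(u,v) ∈ (W n).edgeSet) :
    mixedDist (W n) w (Sum.inr ⟨s(u,v), h⟩) =
      min ((W n).dist w u) ((W n).dist w v) := rfl

lemma fin_eq (i j : Fin n) (h : cy i j = 0) : i = j := Fin.ext ((cy_eq_zero_iff i j).1 h)

lemma cy_pos (i j : Fin n) (h : ¬ i = j) : cy i j ≠ 0 := fun h0 => h (fin_eq i j h0)

end Web

namespace Web
variable {n : ℕ}

lemma inj (hn : 4 ≤ n) (z : Fin n) (a b : WV n ⊕ (W n).edgeSet)
    (hr : ∀ k : Fin n, mixedDist (W n) (.r k) a = mixedDist (W n) (.r k) b)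
    (h0 : mixedDist (W n) (.p z) a = mixedDist (W n) (.p z) b) : a = b := by
  have hn2 : 2 ≤ n := by omega
  rcases a with av | ⟨e1, he1⟩ <;> rcases b with bv | ⟨e2, he2⟩
  · cases av with
    | p i =>
      cases bv with
      | p j =>
        have H := hr i
        simp only [md_inl, md_inr, dist_r hn2, dist_p hn2, Dr, Dp, eq_self_iff_true, if_true] at H
        have c := cy_self i
        have hij : i = j := fin_eq i j (by omega)
        subst hij
        rfl
      | q j =>
        exfalso
        have H := hr j
        simp only [md_inl, md_inr, dist_r hn2, dist_p hn2, Dr, Dp, eq_self_iff_true, if_true] at H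
        have c := cy_self j
        omega
      | r j =>
        exfalso
        have H := hr j
        simp only [md_inl, md_inr, dist_r hn2, dist_p hn2, Dr, Dp, eq_self_iff_true, if_true] at H
        omega
    | q i =>
      cases bv with
      | p j =>
        exfalso
        have H := hr i
        simp only [md_inl, md_inr, dist_r hn2, dist_p hn2, Dr, Dp, eq_self_iff_true, if_true] at H
        have c := cy_self i
        omega
      | q j =>
        have H := hr i
        simp only [md_inl, md_inr, dist_r hn2, dist_p hn2, Dr, Dp, eq_self_iff_true, if_true] at H
        have c := cy_self i
        have hij : i = j := fin_eq i j (by omega)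
        subst hij
        rfl
      | r j =>
        exfalso
        have H := hr j
        simp only [md_inl, md_inr, dist_r hn2, dist_p hn2, Dr, Dp, eq_self_iff_true, if_true] at H
        omega
    | r i =>
      cases bv with
      | p j =>
        exfalso
        have H := hr i
        simp only [md_inl, md_inr, dist_r hn2, dist_p hn2, Dr, Dp, eq_self_iff_true, if_true] at H
        omega
      | q j =>
        exfalso
        have H := hr i
        simp only [md_inl, md_inr, dist_r hn2, dist_p hn2, Dr, Dp, eq_self_iff_true, if_true] at H
        omega
      | r j =>
        by_cases h1 : i = j
        · subst h1; rfl
        · exfalso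
          have hji : ¬ j = i := fun h => h1 h.symm
          have H := hr i
          simp only [md_inl, md_inr, dist_r hn2, dist_p hn2, Dr, Dp, eq_self_iff_true, if_true, hji, if_false] at H
          omega
  · cases av with
    | p i =>
      obtain ⟨j, rfl | rfl | rfl | rfl⟩ := edge_cases e2 he2
      ·
        exfalso
        have H := hr j
        simp only [md_inl, md_inr, dist_r hn2, dist_p hn2, Dr, Dp, eq_self_iff_true, if_true] at H
        have c := cy_self j
        omega
      · exfalso
        by_cases h1 : i = j
        · have H := hr (finSucc j)
          simp only [md_inl, md_inr, dist_r hn2, dist_p hn2, Dr, Dp, eq_self_iff_true, if_true, h1] at H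
          have sc := cy_comm (finSucc j) j
          have s1 := cy_succ_self hn2 j
          have c := cy_self (finSucc j)
          omega
        · by_cases h2 : i = finSucc j
          · have H := hr j
            simp only [md_inl, md_inr, dist_r hn2, dist_p hn2, Dr, Dp, eq_self_iff_true, if_true, h2] at H
            have c := cy_self j
            have s1 := cy_succ_self hn2 j
            omega
          · have H := hr i
            simp only [md_inl, md_inr, dist_r hn2, dist_p hn2, Dr, Dp, eq_self_iff_true, if_true] at H
            have c := cy_self i
            have p1 := cy_pos i j h1
            have p2 := cy_pos i (finSucc j) h2
            omega
      ·
        exfalso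
        have H := hr j
        simp only [md_inl, md_inr, dist_r hn2, dist_p hn2, Dr, Dp, eq_self_iff_true, if_true] at H
        have c := cy_self j
        omega
      ·
        exfalso
        have H := hr j
        simp only [md_inl, md_inr, dist_r hn2, dist_p hn2, Dr, Dp, eq_self_iff_true, if_true] at H
        omega
    | q i =>
      obtain ⟨j, rfl | rfl | rfl | rfl⟩ := edge_cases e2 he2
      · exfalso
        by_cases h1 : i = j
        · simp only [md_inl, md_inr, dist_r hn2, dist_p hn2, Dr, Dp, eq_self_iff_true, if_true, h1] at h0
          omega
        · have H := hr i
          simp only [md_inl, md_inr, dist_r hn2, dist_p hn2, Dr, Dp, eq_self_iff_true, if_true] at H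
          have c := cy_self i
          have p1 := cy_pos i j h1
          omega
      ·
        exfalso
        have H := hr i
        simp only [md_inl, md_inr, dist_r hn2, dist_p hn2, Dr, Dp, eq_self_iff_true, if_true] at H
        have c := cy_self i
        omega
      · exfalso
        by_cases h1 : i = j
        · have H := hr (finSucc j)
          simp only [md_inl, md_inr, dist_r hn2, dist_p hn2, Dr, Dp, eq_self_iff_true, if_true, h1] at H
          have sc := cy_comm (finSucc j) j
          have s1 := cy_succ_self hn2 j
          have c := cy_self (finSucc j)
          omega
        · by_cases h2 : i = finSucc j
          · have H := hr j
            simp only [md_inl, md_inr, dist_r hn2, dist_p hn2, Dr, Dp, eq_self_iff_true, if_true, h2] at H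
            have c := cy_self j
            have s1 := cy_succ_self hn2 j
            omega
          · have H := hr i
            simp only [md_inl, md_inr, dist_r hn2, dist_p hn2, Dr, Dp, eq_self_iff_true, if_true] at H
            have c := cy_self i
            have p1 := cy_pos i j h1
            have p2 := cy_pos i (finSucc j) h2
            omega
      ·
        exfalso
        have H := hr j
        simp only [md_inl, md_inr, dist_r hn2, dist_p hn2, Dr, Dp, eq_self_iff_true, if_true] at H
        omega
    | r i =>
      obtain ⟨j, rfl | rfl | rfl | rfl⟩ := edge_cases e2 he2
      ·
        exfalso
        have H := hr i
        simp only [md_inl, md_inr, dist_r hn2, dist_p hn2, Dr, Dp, eq_self_iff_true, if_true] at H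
        omega
      ·
        exfalso
        have H := hr i
        simp only [md_inl, md_inr, dist_r hn2, dist_p hn2, Dr, Dp, eq_self_iff_true, if_true] at H
        omega
      ·
        exfalso
        have H := hr i
        simp only [md_inl, md_inr, dist_r hn2, dist_p hn2, Dr, Dp, eq_self_iff_true, if_true] at H
        omega
      · exfalso
        by_cases h1 : i = j
        · simp only [md_inl, md_inr, dist_r hn2, dist_p hn2, Dr, Dp, eq_self_iff_true, if_true, h1] at h0
          omega
        · have hji : ¬ j = i := fun h => h1 h.symm
          have H := hr i
          simp only [md_inl, md_inr, dist_r hn2, dist_p hn2, Dr, Dp, eq_self_iff_true, if_true, hji, if_false] at H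
          omega
  · obtain ⟨i, rfl | rfl | rfl | rfl⟩ := edge_cases e1 he1
    · cases bv with
      | p j =>
        exfalso
        have H := hr i
        simp only [md_inl, md_inr, dist_r hn2, dist_p hn2, Dr, Dp, eq_self_iff_true, if_true] at H
        have c := cy_self i
        omega
      | q j =>
        exfalso
        by_cases h1 : j = i
        · simp only [md_inl, md_inr, dist_r hn2, dist_p hn2, Dr, Dp, eq_self_iff_true, if_true, h1] at h0
          omega
        · have H := hr j
          simp only [md_inl, md_inr, dist_r hn2, dist_p hn2, Dr, Dp, eq_self_iff_true, if_true] at H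
          have c := cy_self j
          have p1 := cy_pos j i h1
          omega
      | r j =>
        exfalso
        have H := hr j
        simp only [md_inl, md_inr, dist_r hn2, dist_p hn2, Dr, Dp, eq_self_iff_true, if_true] at H
        omega
    · cases bv with
      | p j =>
        exfalso
        by_cases h1 : j = i
        · have H := hr (finSucc i)
          simp only [md_inl, md_inr, dist_r hn2, dist_p hn2, Dr, Dp, eq_self_iff_true, if_true, h1] at H
          have sc := cy_comm (finSucc i) i
          have s1 := cy_succ_self hn2 i
          have c := cy_self (finSucc i)
          omega
        · by_cases h2 : j = finSucc i
          · have H := hr i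
            simp only [md_inl, md_inr, dist_r hn2, dist_p hn2, Dr, Dp, eq_self_iff_true, if_true, h2] at H
            have c := cy_self i
            have s1 := cy_succ_self hn2 i
            omega
          · have H := hr j
            simp only [md_inl, md_inr, dist_r hn2, dist_p hn2, Dr, Dp, eq_self_iff_true, if_true] at H
            have c := cy_self j
            have p1 := cy_pos j i h1
            have p2 := cy_pos j (finSucc i) h2
            omega
      | q j =>
        exfalso
        have H := hr j
        simp only [md_inl, md_inr, dist_r hn2, dist_p hn2, Dr, Dp, eq_self_iff_true, if_true] at H
        have c := cy_self j
        omega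
      | r j =>
        exfalso
        have H := hr j
        simp only [md_inl, md_inr, dist_r hn2, dist_p hn2, Dr, Dp, eq_self_iff_true, if_true] at H
        omega
    · cases bv with
      | p j =>
        exfalso
        have H := hr i
        simp only [md_inl, md_inr, dist_r hn2, dist_p hn2, Dr, Dp, eq_self_iff_true, if_true] at H
        have c := cy_self i
        omega
      | q j =>
        exfalso
        by_cases h1 : j = i
        · have H := hr (finSucc i)
          simp only [md_inl, md_inr, dist_r hn2, dist_p hn2, Dr, Dp, eq_self_iff_true, if_true, h1] at H
          have sc := cy_comm (finSucc i) i
          have s1 := cy_succ_self hn2 i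
          have c := cy_self (finSucc i)
          omega
        · by_cases h2 : j = finSucc i
          · have H := hr i
            simp only [md_inl, md_inr, dist_r hn2, dist_p hn2, Dr, Dp, eq_self_iff_true, if_true, h2] at H
            have c := cy_self i
            have s1 := cy_succ_self hn2 i
            omega
          · have H := hr j
            simp only [md_inl, md_inr, dist_r hn2, dist_p hn2, Dr, Dp, eq_self_iff_true, if_true] at H
            have c := cy_self j
            have p1 := cy_pos j i h1
            have p2 := cy_pos j (finSucc i) h2
            omega
      | r j =>
        exfalso
        have H := hr j
        simp only [md_inl, md_inr, dist_r hn2, dist_p hn2, Dr, Dp, eq_self_iff_true, if_true] at H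
        omega
    · cases bv with
      | p j =>
        exfalso
        have H := hr i
        simp only [md_inl, md_inr, dist_r hn2, dist_p hn2, Dr, Dp, eq_self_iff_true, if_true] at H
        omega
      | q j =>
        exfalso
        have H := hr i
        simp only [md_inl, md_inr, dist_r hn2, dist_p hn2, Dr, Dp, eq_self_iff_true, if_true] at H
        omega
      | r j =>
        exfalso
        by_cases h1 : j = i
        · simp only [md_inl, md_inr, dist_r hn2, dist_p hn2, Dr, Dp, eq_self_iff_true, if_true, h1] at h0
          omega
        · have hij : ¬ i = j := fun h => h1 h.symm
          have H := hr j
          simp only [md_inl, md_inr, dist_r hn2, dist_p hn2, Dr, Dp, eq_self_iff_true, if_true, hij, if_false] at H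
          omega
  · obtain ⟨i, rfl | rfl | rfl | rfl⟩ := edge_cases e1 he1 <;>
      obtain ⟨j, rfl | rfl | rfl | rfl⟩ := edge_cases e2 he2
    ·
      have H := hr i
      simp only [md_inl, md_inr, dist_r hn2, dist_p hn2, Dr, Dp, eq_self_iff_true, if_true] at H
      have c := cy_self i
      have hij : i = j := fin_eq i j (by omega)
      subst hij
      rfl
    ·
      exfalso
      have H := hr i
      simp only [md_inl, md_inr, dist_r hn2, dist_p hn2, Dr, Dp, eq_self_iff_true, if_true] at H
      have c := cy_self i
      omega
    · exfalso
      by_cases h1 : i = j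
      · have H := hr (finSucc j)
        simp only [md_inl, md_inr, dist_r hn2, dist_p hn2, Dr, Dp, eq_self_iff_true, if_true, h1] at H
        have sc := cy_comm (finSucc j) j
        have s1 := cy_succ_self hn2 j
        have c := cy_self (finSucc j)
        omega
      · by_cases h2 : i = finSucc j
        · have H := hr j
          simp only [md_inl, md_inr, dist_r hn2, dist_p hn2, Dr, Dp, eq_self_iff_true, if_true, h2] at H
          have c := cy_self j
          have s1 := cy_succ_self hn2 j
          omega
        · have H := hr i
          simp only [md_inl, md_inr, dist_r hn2, dist_p hn2, Dr, Dp, eq_self_iff_true, if_true] at H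
          have c := cy_self i
          have p1 := cy_pos i j h1
          have p2 := cy_pos i (finSucc j) h2
          omega
    ·
      exfalso
      have H := hr j
      simp only [md_inl, md_inr, dist_r hn2, dist_p hn2, Dr, Dp, eq_self_iff_true, if_true] at H
      omega
    ·
      exfalso
      have H := hr j
      simp only [md_inl, md_inr, dist_r hn2, dist_p hn2, Dr, Dp, eq_self_iff_true, if_true] at H
      have c := cy_self j
      omega
    · by_cases h1 : i = j
      · subst h1; rfl
      · exfalso
        by_cases h2 : j = finSucc i
        · have H := hr i
          simp only [md_inl, md_inr, dist_r hn2, dist_p hn2, Dr, Dp, eq_self_iff_true, if_true, h2] at H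
          have c := cy_self i
          have s1 := cy_succ_self hn2 i
          have s2 := cy_succ_succ hn i
          omega
        · by_cases h3 : i = finSucc j
          · have H := hr j
            simp only [md_inl, md_inr, dist_r hn2, dist_p hn2, Dr, Dp, eq_self_iff_true, if_true, h3] at H
            have c := cy_self j
            have s1 := cy_succ_self hn2 j
            have s2 := cy_succ_succ hn j
            omega
          · have H := hr i
            simp only [md_inl, md_inr, dist_r hn2, dist_p hn2, Dr, Dp, eq_self_iff_true, if_true] at H
            have c := cy_self i
            have p1 := cy_pos i j h1
            have p2 := cy_pos i (finSucc j) h3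
            omega
    ·
      exfalso
      have H := hr j
      simp only [md_inl, md_inr, dist_r hn2, dist_p hn2, Dr, Dp, eq_self_iff_true, if_true] at H
      have c := cy_self j
      omega
    ·
      exfalso
      have H := hr j
      simp only [md_inl, md_inr, dist_r hn2, dist_p hn2, Dr, Dp, eq_self_iff_true, if_true] at H
      omega
    · exfalso
      by_cases h1 : j = i
      · have H := hr (finSucc i)
        simp only [md_inl, md_inr, dist_r hn2, dist_p hn2, Dr, Dp, eq_self_iff_true, if_true, h1] at H
        have sc := cy_comm (finSucc i) i
        have s1 := cy_succ_self hn2 i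
        have c := cy_self (finSucc i)
        omega
      · by_cases h2 : j = finSucc i
        · have H := hr i
          simp only [md_inl, md_inr, dist_r hn2, dist_p hn2, Dr, Dp, eq_self_iff_true, if_true, h2] at H
          have c := cy_self i
          have s1 := cy_succ_self hn2 i
          omega
        · have H := hr j
          simp only [md_inl, md_inr, dist_r hn2, dist_p hn2, Dr, Dp, eq_self_iff_true, if_true] at H
          have c := cy_self j
          have p1 := cy_pos j i h1
          have p2 := cy_pos j (finSucc i) h2
          omega
    ·
      exfalso
      have H := hr i
      simp only [md_inl, md_inr, dist_r hn2, dist_p hn2, Dr, Dp, eq_self_iff_true, if_true] at H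
      have c := cy_self i
      omega
    · by_cases h1 : i = j
      · subst h1; rfl
      · exfalso
        by_cases h2 : j = finSucc i
        · have H := hr i
          simp only [md_inl, md_inr, dist_r hn2, dist_p hn2, Dr, Dp, eq_self_iff_true, if_true, h2] at H
          have c := cy_self i
          have s1 := cy_succ_self hn2 i
          have s2 := cy_succ_succ hn i
          omega
        · by_cases h3 : i = finSucc j
          · have H := hr j
            simp only [md_inl, md_inr, dist_r hn2, dist_p hn2, Dr, Dp, eq_self_iff_true, if_true, h3] at H
            have c := cy_self j
            have s1 := cy_succ_self hn2 j
            have s2 := cy_succ_succ hn j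
            omega
          · have H := hr i
            simp only [md_inl, md_inr, dist_r hn2, dist_p hn2, Dr, Dp, eq_self_iff_true, if_true] at H
            have c := cy_self i
            have p1 := cy_pos i j h1
            have p2 := cy_pos i (finSucc j) h3
            omega
    ·
      exfalso
      have H := hr j
      simp only [md_inl, md_inr, dist_r hn2, dist_p hn2, Dr, Dp, eq_self_iff_true, if_true] at H
      omega
    ·
      exfalso
      have H := hr i
      simp only [md_inl, md_inr, dist_r hn2, dist_p hn2, Dr, Dp, eq_self_iff_true, if_true] at H
      omega
    ·
      exfalso
      have H := hr i
      simp only [md_inl, md_inr, dist_r hn2, dist_p hn2, Dr, Dp, eq_self_iff_true, if_true] at H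
      omega
    ·
      exfalso
      have H := hr i
      simp only [md_inl, md_inr, dist_r hn2, dist_p hn2, Dr, Dp, eq_self_iff_true, if_true] at H
      omega
    · by_cases h1 : i = j
      · subst h1; rfl
      · exfalso
        have hji : ¬ j = i := fun h => h1 h.symm
        have H := hr i
        simp only [md_inl, md_inr, dist_r hn2, dist_p hn2, Dr, Dp, eq_self_iff_true, if_true, hji, if_false] at H
        omega

end Web

namespace Web
variable {n : ℕ}

lemma gen (hn : 4 ≤ n) (z : Fin n) :
    IsMixedMetricGen (W n) (insert (WV.p z) (Set.range WV.r)) := by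
  intro a b hab
  by_contra hc
  push_neg at hc
  exact hab (inj hn z a b
    (fun k => hc (.r k) (Set.mem_insert_of_mem _ ⟨k, rfl⟩))
    (hc (.p z) (Set.mem_insert _ _)))

lemma r_injective : Function.Injective (WV.r : Fin n → WV n) := by
  intro a b h
  injection h

lemma ncard_M (z : Fin n) :
    (insert (WV.p z) (Set.range (WV.r : Fin n → WV n))).ncard = n + 1 := by
  rw [Set.ncard_insert_of_notMem (by simp) (Set.toFinite _)]
  congr 1
  rw [← Nat.card_coe_set_eq, Nat.card_range_of_injective r_injective,
    Nat.card_eq_fintype_card, Fintype.card_fin]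

lemma lower (hn : 4 ≤ n) (M : Set (WV n)) (hM : IsMixedMetricGen (W n) M) :
    n + 1 ≤ M.ncard := by
  have hn2 : 2 ≤ n := by omega
  have z : Fin n := ⟨0, by omega⟩
  have hr : ∀ j : Fin n, WV.r j ∈ M := by
    intro j
    obtain ⟨w, hwM, hw⟩ := hM (Sum.inl (.q j))
      (Sum.inr ⟨s(.q j, .r j), (by rw [SimpleGraph.mem_edgeSet]; exact adj_qr j)⟩) (by simp)
    suffices hwr : w = .r j by rwa [hwr] at hwM
    by_contra hne
    apply hw
    rw [md_inl, md_inr]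
    have key : (W n).dist w (.q j) + 1 = (W n).dist w (.r j) := by
      cases w with
      | p k => rw [dist_p hn2, dist_p hn2]; simp [Dp]
      | q k =>
        rw [dist_q hn2, dist_q hn2]
        by_cases h : j = k
        · subst h; simp [Dq, cy_self]
        · simp [Dq, h]
      | r k =>
        have h : ¬ j = k := by rintro rfl; exact hne rfl
        rw [dist_r hn2, dist_r hn2]
        simp [Dr, h]
    omega
  have hx : ∃ x ∈ M, ∀ j : Fin n, x ≠ WV.r j := by
    obtain ⟨w, hwM, hw⟩ := hM (Sum.inl (.q z))
      (Sum.inr ⟨s(.p z, .q z), (by rw [SimpleGraph.mem_edgeSet]; exact adj_pq z)⟩) (by simp)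
    refine ⟨w, hwM, ?_⟩
    intro j hwj
    apply hw
    subst hwj
    rw [md_inl, md_inr]
    simp only [dist_r hn2, Dr]
    omega
  obtain ⟨x, hxM, hxr⟩ := hx
  have hsub : insert x (Set.range WV.r) ⊆ M := by
    rintro y (rfl | ⟨j, rfl⟩)
    · exact hxM
    · exact hr j
  have hcard : (insert x (Set.range (WV.r : Fin n → WV n))).ncard = n + 1 := by
    rw [Set.ncard_insert_of_notMem
      (by simp only [Set.mem_range, not_exists]; exact fun j h => hxr j h.symm)
      (Set.toFinite _)]
    congr 1
    rw [← Nat.card_coe_set_eq, Nat.card_range_of_injective r_injective,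
      Nat.card_eq_fintype_card, Fintype.card_fin]
  calc n + 1 = _ := hcard.symm
    _ ≤ M.ncard := Set.ncard_le_ncard hsub (Set.toFinite M)

end Web


theorem stmt10 (n : ℕ) (hn : 4 ≤ n) : mixedMetricDim (W n) = n + 1 := by
  have z : Fin n := ⟨0, by omega⟩
  have hmem : n + 1 ∈ {k | ∃ M : Set (WV n), IsMixedMetricGen (W n) M ∧ M.ncard = k} :=
    ⟨insert (WV.p z) (Set.range WV.r), Web.gen hn z, Web.ncard_M z⟩
  apply le_antisymm
  · exact Nat.sInf_le hmem
  · apply le_csInf ⟨n + 1, hmem⟩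
    rintro k ⟨M, hM, rfl⟩
    exact Web.lower hn M hM
end

section
/- For the web graph W_n with n ≥ 4, the set {p_1, r_1, r_2, ..., r_n} is an independent set of vertices that is a mixed metric generator; hence W_n admits an independent mixed metric generator of cardinality n + 1. -/
def cyc (n a b : ℕ) : ℕ :=
  if a ≤ b then min (b - a) (n - (b - a)) else min (a - b) (n - (a - b))

lemma succ_mod {n a : ℕ} (ha : a < n) : (a + 1) % n = if a + 1 = n then 0 else a + 1 := by
  split_ifs with h
  · simp [h]
  · exact Nat.mod_eq_of_lt (by omega)

lemma pred_mod {n a : ℕ} (ha : a < n) (hn : 1 ≤ n) :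
    (a + n - 1) % n = if a = 0 then n - 1 else a - 1 := by
  split_ifs with h
  · subst h; simpa using Nat.mod_eq_of_lt (by omega)
  · have : a + n - 1 = (a - 1) + n := by omega
    rw [this, Nat.add_mod_right]; exact Nat.mod_eq_of_lt (by omega)

lemma pred_succ {n a : ℕ} (hn : 1 ≤ n) (ha : a < n) : ((a + n - 1) % n + 1) % n = a := by
  rw [pred_mod ha hn]
  split_ifs with h
  · have h1 : n - 1 + 1 = n := by omega
    rw [h1, Nat.mod_self]; omega
  · have h2 : a - 1 + 1 = a := by omega
    rw [h2, Nat.mod_eq_of_lt ha]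

lemma cyc_self (n a : ℕ) : cyc n a a = 0 := by simp [cyc]

lemma cyc_comm (n a b : ℕ) : cyc n a b = cyc n b a := by
  unfold cyc; simp only [Nat.min_def]; split_ifs <;> omega

lemma cyc_pos {n a b : ℕ} (ha : a < n) (hb : b < n) (h : a ≠ b) : 0 < cyc n a b := by
  unfold cyc; simp only [Nat.min_def]; split_ifs <;> omega

lemma cyc_eq_zero {n a b : ℕ} (ha : a < n) (hb : b < n) (h : cyc n a b = 0) : a = b := by
  by_contra hab; have := cyc_pos ha hb hab; omega

lemma cyc_succ_self {n a : ℕ} (hn : 2 ≤ n) (ha : a < n) : cyc n ((a+1) % n) a = 1 := by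
  rw [succ_mod ha]; unfold cyc; simp only [Nat.min_def]; split_ifs <;> omega

lemma cyc_self_succ {n a : ℕ} (hn : 2 ≤ n) (ha : a < n) : cyc n a ((a+1) % n) = 1 := by
  rw [cyc_comm]; exact cyc_succ_self hn ha

lemma cyc_succ_succ_self {n a : ℕ} (hn : 4 ≤ n) (ha : a < n) :
    cyc n (((a+1) % n + 1) % n) a = 2 := by
  have h2 : (a+1) % n < n := Nat.mod_lt _ (by omega)
  rw [succ_mod h2, succ_mod ha]
  unfold cyc; simp only [Nat.min_def]; split_ifs <;> omega

set_option maxHeartbeats 1600000 in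
lemma cyc_lip_succ {n a b : ℕ} (ha : a < n) (hb : b < n) :
    cyc n ((a+1) % n) b ≤ cyc n a b + 1 ∧ cyc n a b ≤ cyc n ((a+1) % n) b + 1 := by
  rw [succ_mod ha]; unfold cyc; simp only [Nat.min_def]; split_ifs <;> omega

set_option maxHeartbeats 1600000 in
lemma cyc_decr {n a b : ℕ} (hn : 1 ≤ n) (ha : a < n) (hb : b < n) (h : a ≠ b) :
    cyc n ((a+1) % n) b = cyc n a b - 1 ∨ cyc n ((a + n - 1) % n) b = cyc n a b - 1 := by
  rw [succ_mod ha, pred_mod ha hn]; unfold cyc; simp only [Nat.min_def]; split_ifs <;> omega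
namespace WebAux
open SimpleGraph

variable {n : ℕ}

def DD (n : ℕ) : WV n → WV n → ℕ
  | .p i, .p j => cyc n i.val j.val
  | .p i, .q j => cyc n i.val j.val + 1
  | .p i, .r j => cyc n i.val j.val + 2
  | .q i, .p j => cyc n i.val j.val + 1
  | .q i, .q j => cyc n i.val j.val
  | .q i, .r j => cyc n i.val j.val + 1
  | .r i, .p j => cyc n i.val j.val + 2
  | .r i, .q j => cyc n i.val j.val + 1
  | .r i, .r j => if i = j then 0 else cyc n i.val j.val + 2

lemma finSucc_ne (hn : 2 ≤ n) (i : Fin n) : finSucc i ≠ i := by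
  intro h
  have hv : (i.val + 1) % n = i.val := congrArg Fin.val h
  rw [succ_mod i.isLt] at hv
  split_ifs at hv <;> omega

lemma adj_pq (i : Fin n) : (W n).Adj (.p i) (.q i) := by
  rw [W, SimpleGraph.fromRel_adj]
  exact ⟨fun h => (by cases h), Or.inl ⟨i, Or.inl ⟨rfl, rfl⟩⟩⟩

lemma adj_qr (i : Fin n) : (W n).Adj (.q i) (.r i) := by
  rw [W, SimpleGraph.fromRel_adj]
  exact ⟨fun h => (by cases h), Or.inl ⟨i, Or.inr (Or.inr (Or.inr ⟨rfl, rfl⟩))⟩⟩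

lemma adj_pp (hn : 2 ≤ n) (i : Fin n) : (W n).Adj (.p i) (.p (finSucc i)) := by
  rw [W, SimpleGraph.fromRel_adj]
  refine ⟨fun h => ?_, Or.inl ⟨i, Or.inr (Or.inl ⟨rfl, rfl⟩)⟩⟩
  exact finSucc_ne hn i (by injection h with h; exact h.symm)

lemma adj_qq (hn : 2 ≤ n) (i : Fin n) : (W n).Adj (.q i) (.q (finSucc i)) := by
  rw [W, SimpleGraph.fromRel_adj]
  refine ⟨fun h => ?_, Or.inl ⟨i, Or.inr (Or.inr (Or.inl ⟨rfl, rfl⟩))⟩⟩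
  exact finSucc_ne hn i (by injection h with h; exact h.symm)

/-- generic walk along a `finSucc`-cycle -/
lemma exists_walk_cycle (hn : 2 ≤ n) (f : Fin n → WV n)
    (hf : ∀ i, (W n).Adj (f i) (f (finSucc i))) :
    ∀ (m : ℕ) (i j : Fin n), cyc n i.val j.val = m →
      ∃ w : (W n).Walk (f i) (f j), w.length = m := by
  intro m
  induction m with
  | zero =>
    intro i j h
    have : i = j := Fin.ext (cyc_eq_zero i.isLt j.isLt h)
    subst this; exact ⟨.nil, rfl⟩
  | succ m ih =>
    intro i j h
    have hij : i.val ≠ j.val := by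
      intro hv; rw [Fin.ext hv, cyc_self] at h; omega
    rcases cyc_decr (by omega) i.isLt j.isLt hij with hd | hd
    · have hc : cyc n (finSucc i).val j.val = m := by
        simp only [finSucc]; omega
      obtain ⟨w, hw⟩ := ih (finSucc i) j hc
      exact ⟨.cons (hf i) w, by simp [hw]⟩
    · set i' : Fin n := ⟨(i.val + n - 1) % n, Nat.mod_lt _ (by omega)⟩ with hi'
      have hsi : finSucc i' = i := by
        apply Fin.ext
        simp only [finSucc, hi']
        exact pred_succ (by omega) i.isLt
      have hc : cyc n i'.val j.val = m := by show cyc n ((i.val + n - 1) % n) j.val = m; omega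
      obtain ⟨w, hw⟩ := ih i' j hc
      have hadj : (W n).Adj (f i) (f i') := by
        have := hf i'; rw [hsi] at this; exact this.symm
      exact ⟨.cons hadj w, by simp [hw]⟩

lemma exists_walk_DD (hn : 2 ≤ n) (x y : WV n) :
    ∃ w : (W n).Walk x y, w.length = DD n x y := by
  have WP := exists_walk_cycle hn WV.p (adj_pp hn)
  have WQ := exists_walk_cycle hn WV.q (adj_qq hn)
  cases x with
  | p i =>
    cases y with
    | p j => obtain ⟨w, hw⟩ := WP _ i j rfl; exact ⟨w, by simp [DD, hw]⟩
    | q j =>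
      obtain ⟨w, hw⟩ := WP _ i j rfl
      exact ⟨w.concat (adj_pq j), by simp [DD, hw]⟩
    | r j =>
      obtain ⟨w, hw⟩ := WP _ i j rfl
      exact ⟨(w.concat (adj_pq j)).concat (adj_qr j), by simp [DD, hw]⟩
  | q i =>
    cases y with
    | p j =>
      obtain ⟨w, hw⟩ := WQ _ i j rfl
      exact ⟨w.concat (adj_pq j).symm, by simp [DD, hw]⟩
    | q j => obtain ⟨w, hw⟩ := WQ _ i j rfl; exact ⟨w, by simp [DD, hw]⟩
    | r j =>
      obtain ⟨w, hw⟩ := WQ _ i j rfl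
      exact ⟨w.concat (adj_qr j), by simp [DD, hw]⟩
  | r i =>
    cases y with
    | p j =>
      obtain ⟨w, hw⟩ := WQ _ i j rfl
      exact ⟨.cons (adj_qr i).symm (w.concat (adj_pq j).symm), by simp [DD, hw]⟩
    | q j =>
      obtain ⟨w, hw⟩ := WQ _ i j rfl
      exact ⟨.cons (adj_qr i).symm w, by simp [DD, hw]⟩
    | r j =>
      by_cases hij : i = j
      · subst hij; exact ⟨.nil, by simp [DD]⟩
      · obtain ⟨w, hw⟩ := WQ _ i j rfl
        exact ⟨.cons (adj_qr i).symm (w.concat (adj_qr j)), by simp [DD, hw, hij]⟩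

lemma DD_lip (hn : 2 ≤ n) {x y : WV n} (h : (W n).Adj x y) (z : WV n) :
    DD n x z ≤ DD n y z + 1 := by
  rw [W, SimpleGraph.fromRel_adj] at h
  obtain ⟨-, h | h⟩ := h <;> obtain ⟨i, h⟩ := h <;>
    rcases h with ⟨rfl, rfl⟩ | ⟨rfl, rfl⟩ | ⟨rfl, rfl⟩ | ⟨rfl, rfl⟩ <;>
    cases z with
  | _ j =>
    first
    | (simp only [DD]; omega)
    | (have := cyc_lip_succ (a := i.val) (b := j.val) i.isLt j.isLt
       simp only [DD, finSucc]; omega)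
    | (simp only [DD]
       by_cases hij : i = j
       · subst hij; simp [cyc_self]
       · simp only [if_neg hij, if_neg (Ne.symm hij)]; omega)

lemma DD_self (x : WV n) : DD n x x = 0 := by
  cases x <;> simp [DD, cyc_self]

lemma DD_le_length (hn : 2 ≤ n) {x y : WV n} (w : (W n).Walk x y) :
    DD n x y ≤ w.length := by
  induction w with
  | nil => simp [DD_self]
  | cons h w ih =>
    calc DD n _ _ ≤ DD n _ _ + 1 := DD_lip hn h _
    _ ≤ _ := by simpa using Nat.add_le_add_right ih 1

lemma dist_eq_DD (hn : 2 ≤ n) (x y : WV n) : (W n).dist x y = DD n x y := by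
  obtain ⟨w, hw⟩ := exists_walk_DD hn x y
  refine le_antisymm (hw ▸ SimpleGraph.dist_le w) ?_
  obtain ⟨w', hw'⟩ := w.reachable.exists_walk_length_eq_dist
  calc DD n x y ≤ w'.length := DD_le_length hn w'
  _ = _ := hw'

end WebAux

namespace WebAux
open SimpleGraph

variable {n : ℕ}

lemma cz (j : Fin n) : cyc n j.val j.val = 0 := cyc_self n j.val

lemma cpos {i j : Fin n} (h : i ≠ j) : 0 < cyc n i.val j.val :=
  cyc_pos i.isLt j.isLt (fun hv => h (Fin.ext hv))

lemma cS (hn : 2 ≤ n) (j : Fin n) : cyc n (finSucc j).val j.val = 1 :=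
  cyc_succ_self hn j.isLt

lemma cSS (hn : 4 ≤ n) (j : Fin n) : cyc n (finSucc (finSucc j)).val j.val = 2 :=
  cyc_succ_succ_self hn j.isLt

lemma sne (hn : 2 ≤ n) (j : Fin n) : finSucc j ≠ j := finSucc_ne hn j

inductive Elt (n : ℕ) : Type
  | vp (j : Fin n) | vq (j : Fin n) | vr (j : Fin n)
  | epq (j : Fin n) | epp (j : Fin n) | eqq (j : Fin n) | eqr (j : Fin n)

def toMixed (hn : 2 ≤ n) : Elt n → WV n ⊕ (W n).edgeSet
  | .vp j => Sum.inl (.p j)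
  | .vq j => Sum.inl (.q j)
  | .vr j => Sum.inl (.r j)
  | .epq j => Sum.inr ⟨s(.p j, .q j), (W n).mem_edgeSet.2 (adj_pq j)⟩
  | .epp j => Sum.inr ⟨s(.p j, .p (finSucc j)), (W n).mem_edgeSet.2 (adj_pp hn j)⟩
  | .eqq j => Sum.inr ⟨s(.q j, .q (finSucc j)), (W n).mem_edgeSet.2 (adj_qq hn j)⟩
  | .eqr j => Sum.inr ⟨s(.q j, .r j), (W n).mem_edgeSet.2 (adj_qr j)⟩

lemma classify (hn : 2 ≤ n) (a : WV n ⊕ (W n).edgeSet) :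
    ∃ e : Elt n, a = toMixed hn e := by
  rcases a with v | ⟨e, he⟩
  · cases v with
    | p j => exact ⟨.vp j, rfl⟩
    | q j => exact ⟨.vq j, rfl⟩
    | r j => exact ⟨.vr j, rfl⟩
  · induction e using Sym2.ind with
    | _ x y =>
      have ha : (W n).Adj x y := (W n).mem_edgeSet.1 he
      rw [W, SimpleGraph.fromRel_adj] at ha
      obtain ⟨hne, h | h⟩ := ha <;> obtain ⟨i, h⟩ := h <;>
        rcases h with ⟨rfl, rfl⟩ | ⟨rfl, rfl⟩ | ⟨rfl, rfl⟩ | ⟨rfl, rfl⟩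
      · exact ⟨.epq i, rfl⟩
      · exact ⟨.epp i, rfl⟩
      · exact ⟨.eqq i, rfl⟩
      · exact ⟨.eqr i, rfl⟩
      · exact ⟨.epq i, congrArg Sum.inr (Subtype.ext Sym2.eq_swap)⟩
      · exact ⟨.epp i, congrArg Sum.inr (Subtype.ext Sym2.eq_swap)⟩
      · exact ⟨.eqq i, congrArg Sum.inr (Subtype.ext Sym2.eq_swap)⟩
      · exact ⟨.eqr i, congrArg Sum.inr (Subtype.ext Sym2.eq_swap)⟩

lemma md_r_vp (hn : 2 ≤ n) (k j : Fin n) :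
    mixedDist (W n) (.r k) (toMixed hn (.vp j)) = cyc n k.val j.val + 2 := by
  simp only [toMixed, mixedDist, Sum.elim_inl, dist_eq_DD hn, DD]

lemma md_r_vq (hn : 2 ≤ n) (k j : Fin n) :
    mixedDist (W n) (.r k) (toMixed hn (.vq j)) = cyc n k.val j.val + 1 := by
  simp only [toMixed, mixedDist, Sum.elim_inl, dist_eq_DD hn, DD]

lemma md_r_vr (hn : 2 ≤ n) (k j : Fin n) :
    mixedDist (W n) (.r k) (toMixed hn (.vr j)) =
      if k = j then 0 else cyc n k.val j.val + 2 := by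
  simp only [toMixed, mixedDist, Sum.elim_inl, dist_eq_DD hn, DD]

lemma md_r_epq (hn : 2 ≤ n) (k j : Fin n) :
    mixedDist (W n) (.r k) (toMixed hn (.epq j)) = cyc n k.val j.val + 1 := by
  simp only [toMixed, mixedDist, Sum.elim_inr, edgeDist, Sym2.lift_mk, dist_eq_DD hn, DD]
  simp only [Nat.min_def]; split_ifs <;> omega

lemma md_r_epp (hn : 2 ≤ n) (k j : Fin n) :
    mixedDist (W n) (.r k) (toMixed hn (.epp j)) =
      min (cyc n k.val j.val) (cyc n k.val (finSucc j).val) + 2 := by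
  simp only [toMixed, mixedDist, Sum.elim_inr, edgeDist, Sym2.lift_mk, dist_eq_DD hn, DD]
  simp only [Nat.min_def]; split_ifs <;> omega

lemma md_r_eqq (hn : 2 ≤ n) (k j : Fin n) :
    mixedDist (W n) (.r k) (toMixed hn (.eqq j)) =
      min (cyc n k.val j.val) (cyc n k.val (finSucc j).val) + 1 := by
  simp only [toMixed, mixedDist, Sum.elim_inr, edgeDist, Sym2.lift_mk, dist_eq_DD hn, DD]
  simp only [Nat.min_def]; split_ifs <;> omega

lemma md_r_eqr (hn : 2 ≤ n) (k j : Fin n) :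
    mixedDist (W n) (.r k) (toMixed hn (.eqr j)) =
      if k = j then 0 else cyc n k.val j.val + 1 := by
  simp only [toMixed, mixedDist, Sum.elim_inr, edgeDist, Sym2.lift_mk, dist_eq_DD hn, DD]
  split_ifs with hk
  · subst hk; simp [cz]
  · simp only [Nat.min_def]; split_ifs <;> omega

lemma md_p0_vq (hn : 2 ≤ n) (h0 : 0 < n) (j : Fin n) :
    mixedDist (W n) (.p ⟨0, h0⟩) (toMixed hn (.vq j)) = cyc n 0 j.val + 1 := by
  simp only [toMixed, mixedDist, Sum.elim_inl, dist_eq_DD hn, DD]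

lemma md_p0_epq (hn : 2 ≤ n) (h0 : 0 < n) (j : Fin n) :
    mixedDist (W n) (.p ⟨0, h0⟩) (toMixed hn (.epq j)) =
      min (cyc n 0 j.val) (cyc n 0 j.val + 1) := by
  simp only [toMixed, mixedDist, Sum.elim_inr, edgeDist, Sym2.lift_mk, dist_eq_DD hn, DD]

end WebAux

theorem stmt11 (n : ℕ) (hn : 4 ≤ n) :
    (∀ a ∈ ({WV.p ⟨0, by omega⟩} ∪ Set.range WV.r : Set (WV n)),
      ∀ b ∈ ({WV.p ⟨0, by omega⟩} ∪ Set.range WV.r : Set (WV n)), ¬ (W n).Adj a b) ∧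
    IsMixedMetricGen (W n) ({WV.p ⟨0, by omega⟩} ∪ Set.range WV.r) ∧
    ({WV.p ⟨0, by omega⟩} ∪ Set.range WV.r : Set (WV n)).ncard = n + 1 := by
  have hn2 : 2 ≤ n := by omega
  open WebAux in
  refine ⟨?_, ?_, ?_⟩
  · -- independence
    intro a ha b hb
    rw [W, SimpleGraph.fromRel_adj]
    simp only [Set.mem_union, Set.mem_singleton_iff, Set.mem_range] at ha hb
    rintro ⟨hne, h | h⟩ <;> obtain ⟨i, h⟩ := h <;>
      rcases h with ⟨rfl, rfl⟩ | ⟨rfl, rfl⟩ | ⟨rfl, rfl⟩ | ⟨rfl, rfl⟩ <;>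
      rcases ha with ha | ⟨t, ht⟩ <;> rcases hb with hb | ⟨u, hu⟩ <;>
      simp_all <;>
      exact hne (by rw [ha, hb])
  · -- mixed metric generator
    intro a b hab
    obtain ⟨ea, rfl⟩ := WebAux.classify hn2 a
    obtain ⟨eb, rfl⟩ := WebAux.classify hn2 b
    cases ea with
    | vp j =>
      cases eb with
      | vp j' =>
        by_cases hjj : j = j'
        · exact absurd (by rw [hjj]) hab
        · refine ⟨WV.r (j), Set.mem_union_right _ ⟨j, rfl⟩, ?_⟩
          rw [md_r_vp hn2, md_r_vp hn2]
          have f1 := cz j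
          have f2 := cpos hjj
          omega
      | vq j' =>
        refine ⟨WV.r (j'), Set.mem_union_right _ ⟨j', rfl⟩, ?_⟩
        rw [md_r_vp hn2, md_r_vq hn2]
        have f0 := cz j'
        first | (simp only [Nat.min_def]; split_ifs <;> omega) | omega
      | vr j' =>
        refine ⟨WV.r (j'), Set.mem_union_right _ ⟨j', rfl⟩, ?_⟩
        rw [md_r_vp hn2, md_r_vr hn2, if_pos rfl]
        omega
      | epq j' =>
        refine ⟨WV.r (j'), Set.mem_union_right _ ⟨j', rfl⟩, ?_⟩
        rw [md_r_vp hn2, md_r_epq hn2]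
        have f0 := cz j'
        first | (simp only [Nat.min_def]; split_ifs <;> omega) | omega
      | epp j' =>
        by_cases h : j' = j
        · refine ⟨WV.r (finSucc j), Set.mem_union_right _ ⟨finSucc j, rfl⟩, ?_⟩
          rw [md_r_vp hn2, md_r_epp hn2, h]
          have f1 := cS hn2 j
          have f2 := cz (finSucc j)
          first | (simp only [Nat.min_def]; split_ifs <;> omega) | omega
        · refine ⟨WV.r (j'), Set.mem_union_right _ ⟨j', rfl⟩, ?_⟩
          rw [md_r_vp hn2, md_r_epp hn2]
          have f1 := cz j'
          have f2 := cpos h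
          first | (simp only [Nat.min_def]; split_ifs <;> omega) | omega
      | eqq j' =>
        refine ⟨WV.r (j'), Set.mem_union_right _ ⟨j', rfl⟩, ?_⟩
        rw [md_r_vp hn2, md_r_eqq hn2]
        have f0 := cz j'
        first | (simp only [Nat.min_def]; split_ifs <;> omega) | omega
      | eqr j' =>
        refine ⟨WV.r (j'), Set.mem_union_right _ ⟨j', rfl⟩, ?_⟩
        rw [md_r_vp hn2, md_r_eqr hn2, if_pos rfl]
        omega
    | vq j =>
      cases eb with
      | vp j' =>
        refine ⟨WV.r (j), Set.mem_union_right _ ⟨j, rfl⟩, ?_⟩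
        rw [md_r_vp hn2, md_r_vq hn2]
        have f0 := cz j
        first | (simp only [Nat.min_def]; split_ifs <;> omega) | omega
      | vq j' =>
        by_cases hjj : j = j'
        · exact absurd (by rw [hjj]) hab
        · refine ⟨WV.r (j), Set.mem_union_right _ ⟨j, rfl⟩, ?_⟩
          rw [md_r_vq hn2, md_r_vq hn2]
          have f1 := cz j
          have f2 := cpos hjj
          omega
      | vr j' =>
        refine ⟨WV.r (j'), Set.mem_union_right _ ⟨j', rfl⟩, ?_⟩
        rw [md_r_vq hn2, md_r_vr hn2, if_pos rfl]
        omega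
      | epq j' =>
        by_cases h : j = j'
        · refine ⟨WV.p ⟨0, by omega⟩, Set.mem_union_left _ rfl, ?_⟩
          rw [md_p0_vq hn2, md_p0_epq hn2, h]
          first | (simp only [Nat.min_def]; split_ifs <;> omega) | omega
        · refine ⟨WV.r (j), Set.mem_union_right _ ⟨j, rfl⟩, ?_⟩
          rw [md_r_vq hn2, md_r_epq hn2]
          have f1 := cz j
          have f2 := cpos h
          omega
      | epp j' =>
        refine ⟨WV.r (j), Set.mem_union_right _ ⟨j, rfl⟩, ?_⟩
        rw [md_r_vq hn2, md_r_epp hn2]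
        have f0 := cz j
        first | (simp only [Nat.min_def]; split_ifs <;> omega) | omega
      | eqq j' =>
        by_cases h : j' = j
        · refine ⟨WV.r (finSucc j), Set.mem_union_right _ ⟨finSucc j, rfl⟩, ?_⟩
          rw [md_r_vq hn2, md_r_eqq hn2, h]
          have f1 := cS hn2 j
          have f2 := cz (finSucc j)
          first | (simp only [Nat.min_def]; split_ifs <;> omega) | omega
        · refine ⟨WV.r (j'), Set.mem_union_right _ ⟨j', rfl⟩, ?_⟩
          rw [md_r_vq hn2, md_r_eqq hn2]
          have f1 := cz j'
          have f2 := cpos h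
          first | (simp only [Nat.min_def]; split_ifs <;> omega) | omega
      | eqr j' =>
        refine ⟨WV.r (j'), Set.mem_union_right _ ⟨j', rfl⟩, ?_⟩
        rw [md_r_vq hn2, md_r_eqr hn2, if_pos rfl]
        omega
    | vr j =>
      cases eb with
      | vp j' =>
        refine ⟨WV.r (j), Set.mem_union_right _ ⟨j, rfl⟩, ?_⟩
        rw [md_r_vp hn2, md_r_vr hn2, if_pos rfl]
        omega
      | vq j' =>
        refine ⟨WV.r (j), Set.mem_union_right _ ⟨j, rfl⟩, ?_⟩
        rw [md_r_vq hn2, md_r_vr hn2, if_pos rfl]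
        omega
      | vr j' =>
        by_cases hjj : j = j'
        · exact absurd (by rw [hjj]) hab
        · refine ⟨WV.r (j), Set.mem_union_right _ ⟨j, rfl⟩, ?_⟩
          rw [md_r_vr hn2, md_r_vr hn2, if_pos rfl, if_neg hjj]
          omega
      | epq j' =>
        refine ⟨WV.r (j), Set.mem_union_right _ ⟨j, rfl⟩, ?_⟩
        rw [md_r_vr hn2, md_r_epq hn2, if_pos rfl]
        omega
      | epp j' =>
        refine ⟨WV.r (j), Set.mem_union_right _ ⟨j, rfl⟩, ?_⟩
        rw [md_r_vr hn2, md_r_epp hn2, if_pos rfl]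
        first | (simp only [Nat.min_def]; split_ifs <;> omega) | omega
      | eqq j' =>
        refine ⟨WV.r (j), Set.mem_union_right _ ⟨j, rfl⟩, ?_⟩
        rw [md_r_vr hn2, md_r_eqq hn2, if_pos rfl]
        first | (simp only [Nat.min_def]; split_ifs <;> omega) | omega
      | eqr j' =>
        refine ⟨WV.r (finSucc j'), Set.mem_union_right _ ⟨finSucc j', rfl⟩, ?_⟩
        rw [md_r_vr hn2, md_r_eqr hn2, if_neg (sne hn2 j')]
        have f1 := cS hn2 j'
        by_cases h : finSucc j' = j
        · rw [if_pos h]; omega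
        · rw [if_neg h]; have f2 := cpos h; omega
    | epq j =>
      cases eb with
      | vp j' =>
        refine ⟨WV.r (j), Set.mem_union_right _ ⟨j, rfl⟩, ?_⟩
        rw [md_r_vp hn2, md_r_epq hn2]
        have f0 := cz j
        first | (simp only [Nat.min_def]; split_ifs <;> omega) | omega
      | vq j' =>
        by_cases h : j' = j
        · refine ⟨WV.p ⟨0, by omega⟩, Set.mem_union_left _ rfl, ?_⟩
          rw [md_p0_vq hn2, md_p0_epq hn2, h]
          first | (simp only [Nat.min_def]; split_ifs <;> omega) | omega
        · refine ⟨WV.r (j'), Set.mem_union_right _ ⟨j', rfl⟩, ?_⟩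
          rw [md_r_vq hn2, md_r_epq hn2]
          have f1 := cz j'
          have f2 := cpos h
          omega
      | vr j' =>
        refine ⟨WV.r (j'), Set.mem_union_right _ ⟨j', rfl⟩, ?_⟩
        rw [md_r_vr hn2, md_r_epq hn2, if_pos rfl]
        omega
      | epq j' =>
        by_cases hjj : j = j'
        · exact absurd (by rw [hjj]) hab
        · refine ⟨WV.r (j), Set.mem_union_right _ ⟨j, rfl⟩, ?_⟩
          rw [md_r_epq hn2, md_r_epq hn2]
          have f1 := cz j
          have f2 := cpos hjj
          omega
      | epp j' =>
        refine ⟨WV.r (j), Set.mem_union_right _ ⟨j, rfl⟩, ?_⟩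
        rw [md_r_epq hn2, md_r_epp hn2]
        have f0 := cz j
        first | (simp only [Nat.min_def]; split_ifs <;> omega) | omega
      | eqq j' =>
        by_cases h : j' = j
        · refine ⟨WV.r (finSucc j), Set.mem_union_right _ ⟨finSucc j, rfl⟩, ?_⟩
          rw [md_r_epq hn2, md_r_eqq hn2, h]
          have f1 := cS hn2 j
          have f2 := cz (finSucc j)
          first | (simp only [Nat.min_def]; split_ifs <;> omega) | omega
        · refine ⟨WV.r (j'), Set.mem_union_right _ ⟨j', rfl⟩, ?_⟩
          rw [md_r_epq hn2, md_r_eqq hn2]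
          have f1 := cz j'
          have f2 := cpos h
          first | (simp only [Nat.min_def]; split_ifs <;> omega) | omega
      | eqr j' =>
        refine ⟨WV.r (j'), Set.mem_union_right _ ⟨j', rfl⟩, ?_⟩
        rw [md_r_epq hn2, md_r_eqr hn2, if_pos rfl]
        omega
    | epp j =>
      cases eb with
      | vp j' =>
        by_cases h : j = j'
        · refine ⟨WV.r (finSucc j'), Set.mem_union_right _ ⟨finSucc j', rfl⟩, ?_⟩
          rw [md_r_vp hn2, md_r_epp hn2, h]
          have f1 := cS hn2 j'
          have f2 := cz (finSucc j')
          first | (simp only [Nat.min_def]; split_ifs <;> omega) | omega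
        · refine ⟨WV.r (j), Set.mem_union_right _ ⟨j, rfl⟩, ?_⟩
          rw [md_r_vp hn2, md_r_epp hn2]
          have f1 := cz j
          have f2 := cpos h
          first | (simp only [Nat.min_def]; split_ifs <;> omega) | omega
      | vq j' =>
        refine ⟨WV.r (j'), Set.mem_union_right _ ⟨j', rfl⟩, ?_⟩
        rw [md_r_vq hn2, md_r_epp hn2]
        have f0 := cz j'
        first | (simp only [Nat.min_def]; split_ifs <;> omega) | omega
      | vr j' =>
        refine ⟨WV.r (j'), Set.mem_union_right _ ⟨j', rfl⟩, ?_⟩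
        rw [md_r_vr hn2, md_r_epp hn2, if_pos rfl]
        first | (simp only [Nat.min_def]; split_ifs <;> omega) | omega
      | epq j' =>
        refine ⟨WV.r (j'), Set.mem_union_right _ ⟨j', rfl⟩, ?_⟩
        rw [md_r_epq hn2, md_r_epp hn2]
        have f0 := cz j'
        first | (simp only [Nat.min_def]; split_ifs <;> omega) | omega
      | epp j' =>
        by_cases hjj : j = j'
        · exact absurd (by rw [hjj]) hab
        · by_cases h2 : j = finSucc j'
          · refine ⟨WV.r (finSucc j), Set.mem_union_right _ ⟨finSucc j, rfl⟩, ?_⟩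
            rw [md_r_epp hn2, md_r_epp hn2, h2]
            have f1 := cS hn2 (finSucc j')
            have f2 := cz (finSucc (finSucc j'))
            have f3 := cSS hn j'
            first | (simp only [Nat.min_def]; split_ifs <;> omega) | omega
          · refine ⟨WV.r (j), Set.mem_union_right _ ⟨j, rfl⟩, ?_⟩
            rw [md_r_epp hn2, md_r_epp hn2]
            have f1 := cz j
            have f2 := cpos hjj
            have f3 := cpos h2
            first | (simp only [Nat.min_def]; split_ifs <;> omega) | omega
      | eqq j' =>
        refine ⟨WV.r (j'), Set.mem_union_right _ ⟨j', rfl⟩, ?_⟩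
        rw [md_r_epp hn2, md_r_eqq hn2]
        have f0 := cz j'
        first | (simp only [Nat.min_def]; split_ifs <;> omega) | omega
      | eqr j' =>
        refine ⟨WV.r (j'), Set.mem_union_right _ ⟨j', rfl⟩, ?_⟩
        rw [md_r_epp hn2, md_r_eqr hn2, if_pos rfl]
        first | (simp only [Nat.min_def]; split_ifs <;> omega) | omega
    | eqq j =>
      cases eb with
      | vp j' =>
        refine ⟨WV.r (j), Set.mem_union_right _ ⟨j, rfl⟩, ?_⟩
        rw [md_r_vp hn2, md_r_eqq hn2]
        have f0 := cz j
        first | (simp only [Nat.min_def]; split_ifs <;> omega) | omega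
      | vq j' =>
        by_cases h : j = j'
        · refine ⟨WV.r (finSucc j'), Set.mem_union_right _ ⟨finSucc j', rfl⟩, ?_⟩
          rw [md_r_vq hn2, md_r_eqq hn2, h]
          have f1 := cS hn2 j'
          have f2 := cz (finSucc j')
          first | (simp only [Nat.min_def]; split_ifs <;> omega) | omega
        · refine ⟨WV.r (j), Set.mem_union_right _ ⟨j, rfl⟩, ?_⟩
          rw [md_r_vq hn2, md_r_eqq hn2]
          have f1 := cz j
          have f2 := cpos h
          first | (simp only [Nat.min_def]; split_ifs <;> omega) | omega
      | vr j' =>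
        refine ⟨WV.r (j'), Set.mem_union_right _ ⟨j', rfl⟩, ?_⟩
        rw [md_r_vr hn2, md_r_eqq hn2, if_pos rfl]
        first | (simp only [Nat.min_def]; split_ifs <;> omega) | omega
      | epq j' =>
        by_cases h : j = j'
        · refine ⟨WV.r (finSucc j'), Set.mem_union_right _ ⟨finSucc j', rfl⟩, ?_⟩
          rw [md_r_epq hn2, md_r_eqq hn2, h]
          have f1 := cS hn2 j'
          have f2 := cz (finSucc j')
          first | (simp only [Nat.min_def]; split_ifs <;> omega) | omega
        · refine ⟨WV.r (j), Set.mem_union_right _ ⟨j, rfl⟩, ?_⟩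
          rw [md_r_epq hn2, md_r_eqq hn2]
          have f1 := cz j
          have f2 := cpos h
          first | (simp only [Nat.min_def]; split_ifs <;> omega) | omega
      | epp j' =>
        refine ⟨WV.r (j), Set.mem_union_right _ ⟨j, rfl⟩, ?_⟩
        rw [md_r_epp hn2, md_r_eqq hn2]
        have f0 := cz j
        first | (simp only [Nat.min_def]; split_ifs <;> omega) | omega
      | eqq j' =>
        by_cases hjj : j = j'
        · exact absurd (by rw [hjj]) hab
        · by_cases h2 : j = finSucc j'
          · refine ⟨WV.r (finSucc j), Set.mem_union_right _ ⟨finSucc j, rfl⟩, ?_⟩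
            rw [md_r_eqq hn2, md_r_eqq hn2, h2]
            have f1 := cS hn2 (finSucc j')
            have f2 := cz (finSucc (finSucc j'))
            have f3 := cSS hn j'
            first | (simp only [Nat.min_def]; split_ifs <;> omega) | omega
          · refine ⟨WV.r (j), Set.mem_union_right _ ⟨j, rfl⟩, ?_⟩
            rw [md_r_eqq hn2, md_r_eqq hn2]
            have f1 := cz j
            have f2 := cpos hjj
            have f3 := cpos h2
            first | (simp only [Nat.min_def]; split_ifs <;> omega) | omega
      | eqr j' =>
        refine ⟨WV.r (j'), Set.mem_union_right _ ⟨j', rfl⟩, ?_⟩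
        rw [md_r_eqq hn2, md_r_eqr hn2, if_pos rfl]
        first | (simp only [Nat.min_def]; split_ifs <;> omega) | omega
    | eqr j =>
      cases eb with
      | vp j' =>
        refine ⟨WV.r (j), Set.mem_union_right _ ⟨j, rfl⟩, ?_⟩
        rw [md_r_vp hn2, md_r_eqr hn2, if_pos rfl]
        omega
      | vq j' =>
        refine ⟨WV.r (j), Set.mem_union_right _ ⟨j, rfl⟩, ?_⟩
        rw [md_r_vq hn2, md_r_eqr hn2, if_pos rfl]
        omega
      | vr j' =>
        refine ⟨WV.r (finSucc j), Set.mem_union_right _ ⟨finSucc j, rfl⟩, ?_⟩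
        rw [md_r_vr hn2, md_r_eqr hn2, if_neg (sne hn2 j)]
        have f1 := cS hn2 j
        by_cases h : finSucc j = j'
        · rw [if_pos h]; omega
        · rw [if_neg h]; have f2 := cpos h; omega
      | epq j' =>
        refine ⟨WV.r (j), Set.mem_union_right _ ⟨j, rfl⟩, ?_⟩
        rw [md_r_epq hn2, md_r_eqr hn2, if_pos rfl]
        omega
      | epp j' =>
        refine ⟨WV.r (j), Set.mem_union_right _ ⟨j, rfl⟩, ?_⟩
        rw [md_r_epp hn2, md_r_eqr hn2, if_pos rfl]
        first | (simp only [Nat.min_def]; split_ifs <;> omega) | omega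
      | eqq j' =>
        refine ⟨WV.r (j), Set.mem_union_right _ ⟨j, rfl⟩, ?_⟩
        rw [md_r_eqq hn2, md_r_eqr hn2, if_pos rfl]
        first | (simp only [Nat.min_def]; split_ifs <;> omega) | omega
      | eqr j' =>
        by_cases hjj : j = j'
        · exact absurd (by rw [hjj]) hab
        · refine ⟨WV.r (j), Set.mem_union_right _ ⟨j, rfl⟩, ?_⟩
          rw [md_r_eqr hn2, md_r_eqr hn2, if_pos rfl, if_neg hjj]
          omega
  · -- cardinality
    have hdisj : Disjoint ({WV.p ⟨0, by omega⟩} : Set (WV n)) (Set.range WV.r) := by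
      rw [Set.disjoint_singleton_left]
      rintro ⟨y, hy⟩
      cases hy
    rw [Set.ncard_union_eq hdisj (Set.finite_singleton _) (Set.finite_range _),
      Set.ncard_singleton]
    have hinj : Function.Injective (WV.r (n := n)) := fun a b h => by injection h
    have : (Set.range (WV.r (n := n))).ncard = n := by
      rw [← Set.image_univ, Set.ncard_image_of_injective _ hinj, Set.ncard_univ]
      simp
    omega
end

section
/- In the web graph W_n (n ≥ 4), for each i with 1 ≤ i ≤ n and every vertex w with w ∉ {p_i}, d(w, q_i) = d(w, p_i q_i) fails in general only when w is closer to p_i than to q_i; precisely, a vertex w distinguishes the vertex q_i from the edge p_i q_i if and only if d(w, p_i) < d(w, q_i). In particular, if M ⊆ V(W_n) contains no p_j, then no vertex of M distinguishes q_i from p_i q_i for any i, since every shortest path from a vertex in {q_j, r_j} to p_i passes through some q-vertex. -/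
/-- The retraction sending `p i ↦ q i` and fixing `q`, `r`. -/
def wFold {n : ℕ} : WV n → WV n
  | .p i => .q i
  | .q i => .q i
  | .r i => .r i

lemma wFold_adj {n : ℕ} {a b : WV n} (h : (W n).Adj a b) :
    wFold a = wFold b ∨ (W n).Adj (wFold a) (wFold b) := by
  obtain ⟨hne, h⟩ := h
  rcases h with ⟨i, h⟩ | ⟨i, h⟩ <;>
  rcases h with ⟨ha, hb⟩ | ⟨ha, hb⟩ | ⟨ha, hb⟩ | ⟨ha, hb⟩ <;> subst ha <;> subst hb
  · exact Or.inl rfl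
  · refine Or.inr ⟨?_, Or.inl ⟨i, Or.inr (Or.inr (Or.inl ⟨rfl, rfl⟩))⟩⟩
    intro hq
    apply hne
    injection hq with h'
    exact congrArg WV.p h'
  · exact Or.inr ⟨hne, Or.inl ⟨i, Or.inr (Or.inr (Or.inl ⟨rfl, rfl⟩))⟩⟩
  · exact Or.inr ⟨hne, Or.inl ⟨i, Or.inr (Or.inr (Or.inr ⟨rfl, rfl⟩))⟩⟩
  · exact Or.inl rfl
  · refine Or.inr ⟨?_, Or.inr ⟨i, Or.inr (Or.inr (Or.inl ⟨rfl, rfl⟩))⟩⟩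
    intro hq
    apply hne
    injection hq with h'
    exact congrArg WV.p h'
  · exact Or.inr ⟨hne, Or.inr ⟨i, Or.inr (Or.inr (Or.inl ⟨rfl, rfl⟩))⟩⟩
  · exact Or.inr ⟨hne, Or.inr ⟨i, Or.inr (Or.inr (Or.inr ⟨rfl, rfl⟩))⟩⟩

lemma wFold_walk {n : ℕ} {a b : WV n} (w : (W n).Walk a b) :
    ∃ w' : (W n).Walk (wFold a) (wFold b), w'.length ≤ w.length := by
  induction w with
  | nil => exact ⟨.nil, le_refl _⟩
  | cons h p ih =>
    obtain ⟨w', hw'⟩ := ih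
    rcases wFold_adj h with heq | hadj
    · exact ⟨w'.copy heq.symm rfl, by simpa using hw'.trans (Nat.le_succ _)⟩
    · exact ⟨.cons hadj w', by simpa using Nat.succ_le_succ hw'⟩

lemma wFold_dist {n : ℕ} (a b : WV n) :
    (W n).dist (wFold a) (wFold b) ≤ (W n).dist a b := by
  by_cases h : (W n).Reachable a b
  · obtain ⟨w, hw⟩ := h.exists_walk_length_eq_dist
    obtain ⟨w', hw'⟩ := wFold_walk w
    exact (SimpleGraph.dist_le w').trans (by omega)
  · have h' : ¬ (W n).Reachable (wFold a) (wFold b) := by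
      intro hr
      apply h
      have ra : (W n).Reachable a (wFold a) := by
        cases a with
        | p i => exact SimpleGraph.Adj.reachable ⟨by simp [wFold], Or.inl ⟨i, Or.inl ⟨rfl, rfl⟩⟩⟩
        | q i => exact SimpleGraph.Reachable.refl _
        | r i => exact SimpleGraph.Reachable.refl _
      have rb : (W n).Reachable b (wFold b) := by
        cases b with
        | p i => exact SimpleGraph.Adj.reachable ⟨by simp [wFold], Or.inl ⟨i, Or.inl ⟨rfl, rfl⟩⟩⟩
        | q i => exact SimpleGraph.Reachable.refl _
        | r i => exact SimpleGraph.Reachable.refl _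
      exact (ra.trans hr).trans rb.symm
    rw [SimpleGraph.dist_eq_zero_of_not_reachable h,
        SimpleGraph.dist_eq_zero_of_not_reachable h']

theorem stmt15 (n : ℕ) (hn : 4 ≤ n) :
    (∀ i : Fin n, ∀ w : WV n, w ≠ WV.p i →
      ((W n).dist w (WV.q i) ≠ edgeDist (W n) w s(WV.p i, WV.q i) ↔
        (W n).dist w (WV.p i) < (W n).dist w (WV.q i))) ∧
    (∀ M : Set (WV n), (∀ j : Fin n, WV.p j ∉ M) → ∀ i : Fin n,
      ¬ ∃ w ∈ M, (W n).dist w (WV.q i) ≠ edgeDist (W n) w s(WV.p i, WV.q i)) := by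
  have hed : ∀ (i : Fin n) (w : WV n),
      edgeDist (W n) w s(WV.p i, WV.q i) =
        min ((W n).dist w (WV.p i)) ((W n).dist w (WV.q i)) := by
    intro i w
    rfl
  constructor
  · intro i w _
    rw [hed]
    omega
  · rintro M hM i ⟨w, hwM, hdist⟩
    have hw : wFold w = w := by
      cases w with
      | p j => exact absurd hwM (hM j)
      | q j => rfl
      | r j => rfl
    have := wFold_dist w (WV.p i)
    rw [hw] at this
    have : (W n).dist w (WV.q i) ≤ (W n).dist w (WV.p i) := this
    rw [hed] at hdist
    omega
end
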